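/- arXiv:cs/0602032 — 7 statements merged into one kernel-verified Lean document; each statement's English description precedes it below -/
import Mathlib

section
/- The logarithmic dispersion is symmetric: for all probability measures π, μ on {1,...,n}, δ(π,μ) ≤ δ(μ,π) (and hence δ(π,μ) = δ(μ,π)). -/
open scoped BigOperators
open Classical Filter

/-- Shannon entropy (base-2 logarithms), with the convention 0 · log(1/0) = 0. -/
noncomputable def shannonEntropy {Ω : Type*} [Fintype Ω] (p : Ω → ℝ) : ℝ :=
  ∑ w, (if p w = 0 then 0 else p w * Real.logb 2 (p w)⁻¹)

/-- `p` is a probability measure on the finite set `Ω`. -/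
def IsProbVec {Ω : Type*} [Fintype Ω] (p : Ω → ℝ) : Prop :=
  (∀ w, 0 ≤ p w) ∧ ∑ w, p w = 1

/-- `A` is a nonnegative column-stochastic matrix mapping `p` to `q` with at most `m`
nonzero entries in each row and in each column. -/
def DispWitness {Ω : Type*} [Fintype Ω] (m : ℕ) (A : Matrix Ω Ω ℝ) (p q : Ω → ℝ) : Prop :=
  (∀ i j, 0 ≤ A i j) ∧ (∀ j, ∑ i, A i j = 1) ∧ A.mulVec p = q ∧
  (∀ i, (Finset.univ.filter fun j => A i j ≠ 0).card ≤ m) ∧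
  (∀ j, (Finset.univ.filter fun i => A i j ≠ 0).card ≤ m)

/-- Logarithmic dispersion δ(p,q) = log m for the least witness bound m. -/
noncomputable def logDisp {Ω : Type*} [Fintype Ω] (p q : Ω → ℝ) : ℝ :=
  Real.logb 2 ((sInf {m : ℕ | 0 < m ∧ ∃ A, DispWitness m A p q} : ℕ) : ℝ)

/-- The empirical distribution of the first `n` disjoint `l`-blocks of `S`. -/
noncomputable def blockFreq (k l : ℕ) (S : ℕ → Fin k) (n : ℕ) : (Fin l → Fin k) → ℝ :=
  fun w => (((Finset.range n).filter fun j => ∀ t : Fin l, S (j * l + (t : ℕ)) = w t).card : ℝ) / n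

/-- Finite-state dimension via block entropy rates. -/
noncomputable def dimFS (k : ℕ) (S : ℕ → Fin k) : ℝ :=
  ⨅ l : ℕ+, (1 / ((l : ℝ) * Real.logb 2 k)) *
    Filter.liminf (fun n => shannonEntropy (blockFreq k l S n)) Filter.atTop

/-- Finite-state strong dimension via block entropy rates. -/
noncomputable def DimFS (k : ℕ) (S : ℕ → Fin k) : ℝ :=
  ⨅ l : ℕ+, (1 / ((l : ℝ) * Real.logb 2 k)) *
    Filter.limsup (fun n => shannonEntropy (blockFreq k l S n)) Filter.atTop

/-- `S` is a base-`k` expansion of the real number `x ∈ [0,1]`. -/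
def IsExpansion (k : ℕ) (S : ℕ → Fin k) (x : ℝ) : Prop :=
  x = ∑' n : ℕ, (S n : ℝ) / (k : ℝ) ^ (n + 1)

lemma exists_witness_symm {n m : ℕ} (hm : 0 < m) (p q : Fin n → ℝ)
    (hp : IsProbVec p) (hq : IsProbVec q) (A : Matrix (Fin n) (Fin n) ℝ)
    (hA : DispWitness m A q p) : ∃ A', DispWitness m A' p q := by
  classical
  obtain ⟨hnn, hcol, hmul, hrow, hcolc⟩ := hA
  have hmulj : ∀ j, ∑ i, A j i * q i = p j := by
    intro j
    simpa [Matrix.mulVec, dotProduct] using congrFun hmul j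
  have fact1 : ∀ j i, p j = 0 → A j i * q i = 0 := by
    intro j i hpj
    have h0 : ∑ k, A j k * q k = 0 := by rw [hmulj j, hpj]
    have := (Finset.sum_eq_zero_iff_of_nonneg
      (fun k _ => mul_nonneg (hnn j k) (hq.1 k))).1 h0
    exact this i (Finset.mem_univ i)
  set c : Fin n → ℕ :=
    fun i => (Finset.univ.filter (fun j => p j ≠ 0 ∧ A j i ≠ 0)).card with hc
  set Zs : Finset (Fin n) := Finset.univ.filter (fun j => p j = 0) with hZs
  set Gs : Finset (Fin n) := Finset.univ.filter (fun j => ¬ p j = 0) with hGs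
  set Ts : Finset (Fin n) := Finset.univ.filter (fun i => c i < m) with hTs
  set Fs : Finset (Fin n) := Finset.univ.filter (fun i => ¬ c i < m) with hFs
  -- counting: ∑ c i ≤ m * Gs.card
  have hsum : ∑ i, c i ≤ m * Gs.card := by
    have h1 : ∑ i, c i
        = ∑ j ∈ Gs, (Finset.univ.filter (fun i => A j i ≠ 0)).card := by
      simp only [hc, Finset.card_filter]
      rw [Finset.sum_comm]
      rw [Finset.sum_filter]
      apply Finset.sum_congr rfl
      intro j _
      by_cases hpj : p j = 0 <;> simp [hpj]
    rw [h1]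
    calc ∑ j ∈ Gs, (Finset.univ.filter (fun i => A j i ≠ 0)).card
        ≤ ∑ _j ∈ Gs, m := Finset.sum_le_sum (fun j _ => hrow j)
      _ = m * Gs.card := by rw [Finset.sum_const, smul_eq_mul, mul_comm]
  have hF : m * Fs.card ≤ ∑ i, c i := by
    calc m * Fs.card = ∑ _i ∈ Fs, m := by rw [Finset.sum_const, smul_eq_mul, mul_comm]
      _ ≤ ∑ i ∈ Fs, c i := Finset.sum_le_sum (fun i hi => by
          have := (Finset.mem_filter.1 hi).2; omega)
      _ ≤ ∑ i, c i := Finset.sum_le_sum_of_subset (Finset.filter_subset _ _)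
  have hFG : Fs.card ≤ Gs.card := Nat.le_of_mul_le_mul_left (hF.trans hsum) hm
  have hZT : Zs.card ≤ Ts.card := by
    have h1 : Zs.card + Gs.card = n := by
      have := Finset.card_filter_add_card_filter_not (s := Finset.univ)
        (p := fun j : Fin n => p j = 0)
      simpa [hZs, hGs] using this
    have h2 : Ts.card + Fs.card = n := by
      have := Finset.card_filter_add_card_filter_not (s := Finset.univ)
        (p := fun i : Fin n => c i < m)
      simpa [hTs, hFs] using this
    omega
  obtain ⟨e⟩ : Nonempty (↥Zs ↪ ↥Ts) := by
    apply Function.Embedding.nonempty_of_card_le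
    simpa [Fintype.card_coe] using hZT
  set σ : Fin n → Fin n := fun j =>
    if h : p j = 0 then
      (e ⟨j, Finset.mem_filter.2 ⟨Finset.mem_univ j, h⟩⟩ : ↥Ts) else j with hσ
  have hσT : ∀ j, p j = 0 → c (σ j) < m := by
    intro j h
    have hmem := (e ⟨j, Finset.mem_filter.2 ⟨Finset.mem_univ j, h⟩⟩).2
    rw [hσ]
    simp only [h, dif_pos]
    exact (Finset.mem_filter.1 hmem).2
  have hσinj : ∀ j1 j2, p j1 = 0 → p j2 = 0 → σ j1 = σ j2 → j1 = j2 := by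
    intro j1 j2 h1 h2 heq
    rw [hσ] at heq
    simp only [h1, h2, dif_pos] at heq
    have := e.injective (Subtype.ext heq)
    exact Subtype.ext_iff.1 this
  set A' : Matrix (Fin n) (Fin n) ℝ := fun i j =>
    if p j = 0 then (if i = σ j then 1 else 0) else A j i * q i / p j with hA'
  refine ⟨A', ?_, ?_, ?_, ?_, ?_⟩
  · intro i j
    rw [hA']
    by_cases hpj : p j = 0
    · simp only [hpj, if_true]
      split <;> norm_num
    · simp only [hpj, if_false]
      exact div_nonneg (mul_nonneg (hnn j i) (hq.1 i)) (hp.1 j)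
  · intro j
    by_cases hpj : p j = 0
    · simp [hA', hpj]
    · simp only [hA', hpj, if_false]
      rw [← Finset.sum_div, hmulj j, div_self hpj]
  · funext i
    show ∑ j, A' i j * p j = q i
    have hterm : ∀ j, A' i j * p j = A j i * q i := by
      intro j
      by_cases hpj : p j = 0
      · simp [hA', hpj, fact1 j i hpj]
      · simp only [hA', hpj, if_false]
        exact div_mul_cancel₀ _ hpj
    simp_rw [hterm]
    rw [← Finset.sum_mul, hcol i, one_mul]
  · intro i
    have hsub : (Finset.univ.filter fun j => A' i j ≠ 0) ⊆
        (Finset.univ.filter fun j => p j ≠ 0 ∧ A j i ≠ 0) ∪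
        (Finset.univ.filter fun j => p j = 0 ∧ σ j = i) := by
      intro j hj
      have hj' := (Finset.mem_filter.1 hj).2
      rw [Finset.mem_union, Finset.mem_filter, Finset.mem_filter]
      by_cases hpj : p j = 0
      · right
        refine ⟨Finset.mem_univ j, hpj, ?_⟩
        by_contra hne
        apply hj'
        simp only [hA', hpj, if_true]
        rw [if_neg (fun h => hne h.symm)]
      · left
        refine ⟨Finset.mem_univ j, hpj, ?_⟩
        intro hz
        apply hj'
        simp [hA', hpj, hz]
    have hci : c i ≤ m := by
      refine le_trans (Finset.card_le_card ?_) (hcolc i)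
      intro j hj
      rw [Finset.mem_filter] at hj ⊢
      exact ⟨hj.1, hj.2.2⟩
    refine le_trans (le_trans (Finset.card_le_card hsub) (Finset.card_union_le _ _)) ?_
    by_cases hi : ∃ j0, p j0 = 0 ∧ σ j0 = i
    · obtain ⟨j0, hj0, hσ0⟩ := hi
      have h2 : (Finset.univ.filter fun j => p j = 0 ∧ σ j = i) ⊆ {j0} := by
        intro j hj
        rw [Finset.mem_filter] at hj
        rw [Finset.mem_singleton]
        exact hσinj j j0 hj.2.1 hj0 (hj.2.2.trans hσ0.symm)
      have h2' : (Finset.univ.filter fun j => p j = 0 ∧ σ j = i).card ≤ 1 := by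
        simpa using Finset.card_le_card h2
      have h3 : c i < m := hσ0 ▸ hσT j0 hj0
      have ht : (Finset.univ.filter fun j => p j ≠ 0 ∧ A j i ≠ 0).card = c i := rfl
      omega
    · push_neg at hi
      have h2 : (Finset.univ.filter fun j => p j = 0 ∧ σ j = i) = ∅ := by
        apply Finset.filter_eq_empty_iff.2
        intro j _
        intro h
        exact hi j h.1 h.2
      rw [h2]
      simpa using hci
  · intro j
    by_cases hpj : p j = 0
    · have : (Finset.univ.filter fun i => A' i j ≠ 0) ⊆ {σ j} := by
        intro i hi
        have hi' := (Finset.mem_filter.1 hi).2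
        rw [Finset.mem_singleton]
        by_contra hne
        apply hi'
        simp [hA', hpj, hne]
      exact le_trans (le_trans (Finset.card_le_card this) (by simp)) hm
    · refine le_trans (Finset.card_le_card ?_) (hrow j)
      intro i hi
      have hi' := (Finset.mem_filter.1 hi).2
      rw [Finset.mem_filter]
      refine ⟨Finset.mem_univ i, ?_⟩
      intro hz
      apply hi'
      simp [hA', hpj, hz]

theorem logDisp_symm (n : ℕ) (hn : 0 < n) (p q : Fin n → ℝ)
    (hp : IsProbVec p) (hq : IsProbVec q) :
    logDisp p q ≤ logDisp q p ∧ logDisp p q = logDisp q p := by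
  have hset : {m : ℕ | 0 < m ∧ ∃ A, DispWitness m A p q}
      = {m : ℕ | 0 < m ∧ ∃ A, DispWitness m A q p} := by
    ext m
    simp only [Set.mem_setOf_eq]
    constructor
    · rintro ⟨hm, A, hA⟩
      exact ⟨hm, exists_witness_symm hm q p hq hp A hA⟩
    · rintro ⟨hm, A, hA⟩
      exact ⟨hm, exists_witness_symm hm p q hp hq A hA⟩
  have heq : logDisp p q = logDisp q p := by
    simp only [logDisp]
    rw [hset]
  exact ⟨le_of_eq heq, heq⟩
end

section
/- The logarithmic dispersion satisfies the triangle inequality: for all probability measures π, μ, ν on {1,...,n}, δ(π,ν) ≤ δ(π,μ) + δ(μ,ν). -/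
open scoped BigOperators
open Classical Filter

lemma exists_dispWitness (n : ℕ) (hn : 0 < n) (p q : Fin n → ℝ)
    (hp : IsProbVec p) (hq : IsProbVec q) :
    n ∈ {m : ℕ | 0 < m ∧ ∃ A, DispWitness m A p q} := by
  refine ⟨hn, fun i _ => q i, fun i j => hq.1 i, fun j => hq.2, ?_, ?_, ?_⟩
  · funext i
    simp only [Matrix.mulVec, dotProduct]
    rw [← Finset.mul_sum, hp.2, mul_one]
  · intro i
    calc (Finset.univ.filter fun j => (fun i _ => q i : Matrix (Fin n) (Fin n) ℝ) i j ≠ 0).card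
        ≤ Finset.univ.card := Finset.card_filter_le _ _
      _ = n := by simp
  · intro j
    calc (Finset.univ.filter fun i => (fun i _ => q i : Matrix (Fin n) (Fin n) ℝ) i j ≠ 0).card
        ≤ Finset.univ.card := Finset.card_filter_le _ _
      _ = n := by simp

lemma dispWitness_comp {Ω : Type*} [Fintype Ω] {m₁ m₂ : ℕ} {A₁ A₂ : Matrix Ω Ω ℝ}
    {p q r : Ω → ℝ} (h₁ : DispWitness m₁ A₁ p q) (h₂ : DispWitness m₂ A₂ q r) :
    DispWitness (m₁ * m₂) (A₂ * A₁) p r := by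
  obtain ⟨hA₁nn, hA₁c, hA₁v, hA₁r, hA₁col⟩ := h₁
  obtain ⟨hA₂nn, hA₂c, hA₂v, hA₂r, hA₂col⟩ := h₂
  refine ⟨?_, ?_, ?_, ?_, ?_⟩
  · intro i j
    exact Finset.sum_nonneg fun k _ => mul_nonneg (hA₂nn i k) (hA₁nn k j)
  · intro j
    calc ∑ i, (A₂ * A₁) i j = ∑ i, ∑ k, A₂ i k * A₁ k j := rfl
      _ = ∑ k, (∑ i, A₂ i k) * A₁ k j := by
          rw [Finset.sum_comm]; simp [Finset.sum_mul]
      _ = 1 := by simp only [hA₂c, one_mul]; exact hA₁c j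
  · rw [← Matrix.mulVec_mulVec, hA₁v, hA₂v]
  · intro i
    have hsub : (Finset.univ.filter fun j => (A₂ * A₁) i j ≠ 0) ⊆
        (Finset.univ.filter fun k => A₂ i k ≠ 0).biUnion
          (fun k => Finset.univ.filter fun j => A₁ k j ≠ 0) := by
      intro j hj
      simp only [Finset.mem_filter, Finset.mem_univ, true_and] at hj
      have : ∃ k, A₂ i k * A₁ k j ≠ 0 := by
        by_contra h
        push_neg at h
        exact hj (Finset.sum_eq_zero fun k _ => h k)
      obtain ⟨k, hk⟩ := this
      simp only [Finset.mem_biUnion, Finset.mem_filter, Finset.mem_univ, true_and]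
      exact ⟨k, left_ne_zero_of_mul hk, right_ne_zero_of_mul hk⟩
    calc (Finset.univ.filter fun j => (A₂ * A₁) i j ≠ 0).card
        ≤ _ := Finset.card_le_card hsub
      _ ≤ ∑ k ∈ Finset.univ.filter fun k => A₂ i k ≠ 0,
            (Finset.univ.filter fun j => A₁ k j ≠ 0).card := Finset.card_biUnion_le
      _ ≤ ∑ _k ∈ Finset.univ.filter fun k => A₂ i k ≠ 0, m₁ :=
          Finset.sum_le_sum fun k _ => hA₁r k
      _ = (Finset.univ.filter fun k => A₂ i k ≠ 0).card * m₁ := by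
          rw [Finset.sum_const, smul_eq_mul]
      _ ≤ m₂ * m₁ := Nat.mul_le_mul_right _ (hA₂r i)
      _ = m₁ * m₂ := Nat.mul_comm _ _
  · intro j
    have hsub : (Finset.univ.filter fun i => (A₂ * A₁) i j ≠ 0) ⊆
        (Finset.univ.filter fun k => A₁ k j ≠ 0).biUnion
          (fun k => Finset.univ.filter fun i => A₂ i k ≠ 0) := by
      intro i hi
      simp only [Finset.mem_filter, Finset.mem_univ, true_and] at hi
      have : ∃ k, A₂ i k * A₁ k j ≠ 0 := by
        by_contra h
        push_neg at h
        exact hi (Finset.sum_eq_zero fun k _ => h k)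
      obtain ⟨k, hk⟩ := this
      simp only [Finset.mem_biUnion, Finset.mem_filter, Finset.mem_univ, true_and]
      exact ⟨k, right_ne_zero_of_mul hk, left_ne_zero_of_mul hk⟩
    calc (Finset.univ.filter fun i => (A₂ * A₁) i j ≠ 0).card
        ≤ _ := Finset.card_le_card hsub
      _ ≤ ∑ k ∈ Finset.univ.filter fun k => A₁ k j ≠ 0,
            (Finset.univ.filter fun i => A₂ i k ≠ 0).card := Finset.card_biUnion_le
      _ ≤ ∑ _k ∈ Finset.univ.filter fun k => A₁ k j ≠ 0, m₂ :=
          Finset.sum_le_sum fun k _ => hA₂col k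
      _ = (Finset.univ.filter fun k => A₁ k j ≠ 0).card * m₂ := by
          rw [Finset.sum_const, smul_eq_mul]
      _ ≤ m₁ * m₂ := Nat.mul_le_mul_right _ (hA₁col j)

theorem logDisp_triangle (n : ℕ) (hn : 0 < n) (p q r : Fin n → ℝ)
    (hp : IsProbVec p) (hq : IsProbVec q) (hr : IsProbVec r) :
    logDisp p r ≤ logDisp p q + logDisp q r := by
  set Spq := {m : ℕ | 0 < m ∧ ∃ A, DispWitness m A p q} with hSpq
  set Sqr := {m : ℕ | 0 < m ∧ ∃ A, DispWitness m A q r} with hSqr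
  set Spr := {m : ℕ | 0 < m ∧ ∃ A, DispWitness m A p r} with hSpr
  have h1 : sInf Spq ∈ Spq := Nat.sInf_mem ⟨n, exists_dispWitness n hn p q hp hq⟩
  have h2 : sInf Sqr ∈ Sqr := Nat.sInf_mem ⟨n, exists_dispWitness n hn q r hq hr⟩
  have h3 : sInf Spr ∈ Spr := Nat.sInf_mem ⟨n, exists_dispWitness n hn p r hp hr⟩
  obtain ⟨hm₁, A₁, hA₁⟩ := h1
  obtain ⟨hm₂, A₂, hA₂⟩ := h2
  have hmem : sInf Spq * sInf Sqr ∈ Spr :=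
    ⟨Nat.mul_pos hm₁ hm₂, A₂ * A₁, dispWitness_comp hA₁ hA₂⟩
  have hle : sInf Spr ≤ sInf Spq * sInf Sqr := Nat.sInf_le hmem
  have e1 : logDisp p r = Real.logb 2 ((sInf Spr : ℕ) : ℝ) := rfl
  have e2 : logDisp p q = Real.logb 2 ((sInf Spq : ℕ) : ℝ) := rfl
  have e3 : logDisp q r = Real.logb 2 ((sInf Sqr : ℕ) : ℝ) := rfl
  rw [e1, e2, e3]
  have hpos : (0:ℝ) < ((sInf Spr : ℕ) : ℝ) := by exact_mod_cast h3.1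
  have h1' : ((sInf Spq : ℕ) : ℝ) ≠ 0 := Nat.cast_ne_zero.mpr hm₁.ne'
  have h2' : ((sInf Sqr : ℕ) : ℝ) ≠ 0 := Nat.cast_ne_zero.mpr hm₂.ne'
  calc Real.logb 2 ((sInf Spr : ℕ) : ℝ)
      ≤ Real.logb 2 (((sInf Spq * sInf Sqr : ℕ)) : ℝ) :=
        Real.logb_le_logb_of_le one_lt_two hpos (by exact_mod_cast hle)
    _ = Real.logb 2 (((sInf Spq : ℕ) : ℝ) * ((sInf Sqr : ℕ) : ℝ)) := by push_cast; ring_nf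
    _ = Real.logb 2 ((sInf Spq : ℕ) : ℝ) + Real.logb 2 ((sInf Sqr : ℕ) : ℝ) :=
        Real.logb_mul h1' h2'
end

section
/- Let p ∈ Δₙ be a nonincreasing probability vector and m ≤ n a positive integer. Define r ∈ ℝ^{⌈n/m⌉} by grouping: rᵢ = p_{(i−1)m+1} + ... + p_{min(im,n)}. Then r is a nonincreasing probability vector, and H(p) ≤ H(r) + log m, where H is Shannon entropy. -/
open scoped BigOperators
open Classical Filter

private lemma nat_div_eq_block_iff {m : ℕ} (hm : 0 < m) (j i : ℕ) :
    j / m = i ↔ i * m ≤ j ∧ j < (i + 1) * m := by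
  rw [← Nat.le_div_iff_mul_le hm, ← Nat.div_lt_iff_lt_mul hm]
  omega

private lemma block_entropy_le {α : Type*} (s : Finset α) (q : α → ℝ)
    (hq : ∀ j ∈ s, 0 ≤ q j) (m : ℕ) (hm : 0 < m) (hcard : s.card ≤ m) :
    ∑ j ∈ s, (if q j = 0 then 0 else q j * Real.logb 2 (q j)⁻¹) ≤
      (if (∑ j ∈ s, q j) = 0 then 0 else
        (∑ j ∈ s, q j) * Real.logb 2 (∑ j ∈ s, q j)⁻¹)
      + (∑ j ∈ s, q j) * Real.logb 2 m := by
  classical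
  by_cases ht : ∑ j ∈ s, q j = 0
  · have hz : ∀ j ∈ s, q j = 0 := (Finset.sum_eq_zero_iff_of_nonneg hq).1 ht
    rw [ht, if_pos rfl, Finset.sum_eq_zero (fun j hj => by rw [if_pos (hz j hj)])]
    simp
  · set t := ∑ j ∈ s, q j with htdef
    have ht0 : 0 < t := lt_of_le_of_ne (Finset.sum_nonneg hq) (Ne.symm ht)
    set s' := s.filter (fun j => q j ≠ 0) with hs'
    have hts' : ∑ j ∈ s', q j = t := Finset.sum_filter_ne_zero s
    have hqpos : ∀ j ∈ s', 0 < q j := by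
      intro j hj
      rcases Finset.mem_filter.1 hj with ⟨hj1, hj2⟩
      exact lt_of_le_of_ne (hq j hj1) (Ne.symm hj2)
    have hLHS : ∑ j ∈ s, (if q j = 0 then 0 else q j * Real.logb 2 (q j)⁻¹)
        = ∑ j ∈ s', q j * Real.logb 2 (q j)⁻¹ := by
      rw [hs', Finset.sum_filter]
      exact Finset.sum_congr rfl (fun j _ => by by_cases h : q j = 0 <;> simp [h])
    have hne : s'.Nonempty := by
      rcases Finset.eq_empty_or_nonempty s' with h | h
      · rw [h, Finset.sum_empty] at hts'
        exact absurd hts'.symm ht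
      · exact h
    have hk1 : 1 ≤ s'.card := Finset.card_pos.2 hne
    have hkm : s'.card ≤ m := le_trans (Finset.card_le_card (Finset.filter_subset _ _)) hcard
    have hcastk : (0:ℝ) < (s'.card : ℝ) := by exact_mod_cast hk1
    have hw0 : ∀ j ∈ s', 0 ≤ q j / t := fun j hj => div_nonneg (hqpos j hj).le ht0.le
    have hw1 : ∑ j ∈ s', q j / t = 1 := by rw [← Finset.sum_div, hts', div_self ht]
    have hmem : ∀ j ∈ s', (q j)⁻¹ ∈ Set.Ioi (0:ℝ) :=
      fun j hj => Set.mem_Ioi.2 (inv_pos.2 (hqpos j hj))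
    have jensen := strictConcaveOn_log_Ioi.concaveOn.le_map_sum hw0 hw1 hmem
    have hpt : ∑ j ∈ s', (q j / t) • (q j)⁻¹ = (s'.card : ℝ) / t := by
      have hterm : ∀ j ∈ s', (q j / t) • (q j)⁻¹ = 1 / t := by
        intro j hj
        have hq' : q j ≠ 0 := (hqpos j hj).ne'
        rw [smul_eq_mul, div_mul_eq_mul_div, mul_inv_cancel₀ hq']
      rw [Finset.sum_congr rfl hterm, Finset.sum_const, nsmul_eq_mul, mul_one_div]
    have key : ∑ j ∈ s', q j * Real.log (q j)⁻¹ ≤ t * Real.log ((s'.card : ℝ) / t) := by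
      calc ∑ j ∈ s', q j * Real.log (q j)⁻¹
          = t * ∑ j ∈ s', (q j / t) • Real.log (q j)⁻¹ := by
            rw [Finset.mul_sum]
            refine Finset.sum_congr rfl (fun j hj => ?_)
            rw [smul_eq_mul, ← mul_assoc, mul_comm t (q j / t), div_mul_cancel₀ _ ht]
        _ ≤ t * Real.log ((s'.card : ℝ) / t) := by
            rw [← hpt]
            exact mul_le_mul_of_nonneg_left jensen ht0.le
    have hlog2 : (0:ℝ) < Real.log 2 := Real.log_pos one_lt_two
    have hlogb : ∑ j ∈ s', q j * Real.logb 2 (q j)⁻¹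
        ≤ t * Real.logb 2 ((s'.card : ℝ) / t) := by
      simp only [Real.logb]
      calc ∑ j ∈ s', q j * (Real.log (q j)⁻¹ / Real.log 2)
          = (∑ j ∈ s', q j * Real.log (q j)⁻¹) / Real.log 2 := by
            rw [Finset.sum_div]
            exact Finset.sum_congr rfl (fun j _ => (mul_div_assoc _ _ _).symm)
        _ ≤ (t * Real.log ((s'.card : ℝ) / t)) / Real.log 2 := by gcongr
        _ = t * (Real.log ((s'.card : ℝ) / t) / Real.log 2) := mul_div_assoc _ _ _
    have hsplit : Real.logb 2 ((s'.card : ℝ) / t)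
        = Real.logb 2 (s'.card : ℝ) + Real.logb 2 t⁻¹ := by
      rw [Real.logb_div hcastk.ne' ht, Real.logb_inv]
      ring
    have hmono : Real.logb 2 (s'.card : ℝ) ≤ Real.logb 2 (m : ℝ) :=
      Real.logb_le_logb_of_le one_lt_two hcastk (by exact_mod_cast hkm)
    rw [hLHS, if_neg ht]
    have hfin : t * Real.logb 2 (s'.card : ℝ) ≤ t * Real.logb 2 (m : ℝ) :=
      mul_le_mul_of_nonneg_left hmono ht0.le
    calc ∑ j ∈ s', q j * Real.logb 2 (q j)⁻¹
        ≤ t * Real.logb 2 ((s'.card : ℝ) / t) := hlogb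
      _ = t * Real.logb 2 t⁻¹ + t * Real.logb 2 (s'.card : ℝ) := by rw [hsplit]; ring
      _ ≤ t * Real.logb 2 t⁻¹ + t * Real.logb 2 (m : ℝ) := by linarith

theorem entropy_grouping (n m : ℕ) (hm : 0 < m) (hmn : m ≤ n)
    (p : Fin n → ℝ) (hp : IsProbVec p) (hpm : Antitone p)
    (r : Fin ((n + m - 1) / m) → ℝ)
    (hr : ∀ i, r i = ∑ j ∈ Finset.univ.filter
      (fun j : Fin n => (i : ℕ) * m ≤ (j : ℕ) ∧ (j : ℕ) < ((i : ℕ) + 1) * m), p j) :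
    IsProbVec r ∧ Antitone r ∧
    shannonEntropy p ≤ shannonEntropy r + Real.logb 2 m := by
  classical
  have hdivlt : ∀ j : Fin n, (j : ℕ) / m < (n + m - 1) / m := by
    intro j
    have hj := j.isLt
    have h1 : n + m - 1 = (n - 1) + m := by omega
    have h2 : ((n - 1) + m) / m = (n - 1) / m + 1 := Nat.add_div_right _ hm
    have h3 : (j : ℕ) / m ≤ (n - 1) / m := Nat.div_le_div_right (by omega)
    rw [h1, h2]
    omega
  set grp : Fin n → Fin ((n + m - 1) / m) := fun j => ⟨(j : ℕ) / m, hdivlt j⟩ with hgrp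
  have hblock : ∀ i : Fin ((n + m - 1) / m),
      (Finset.univ.filter fun j : Fin n => (i : ℕ) * m ≤ (j : ℕ) ∧ (j : ℕ) < ((i : ℕ) + 1) * m)
        = Finset.univ.filter (fun j => grp j = i) := by
    intro i
    ext j
    simp only [Finset.mem_filter, Finset.mem_univ, true_and]
    rw [← nat_div_eq_block_iff hm]
    exact ⟨fun h => Fin.ext h, fun h => congrArg Fin.val h⟩
  have hfib : ∀ g : Fin n → ℝ,
      ∑ i : Fin ((n + m - 1) / m), ∑ j ∈ Finset.univ.filter
        (fun j : Fin n => (i : ℕ) * m ≤ (j : ℕ) ∧ (j : ℕ) < ((i : ℕ) + 1) * m), g j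
      = ∑ j, g j := by
    intro g
    rw [Finset.sum_congr rfl (fun i _ => by rw [hblock i])]
    exact Finset.sum_fiberwise _ _ _
  have hrn : ∀ i, 0 ≤ r i := fun i => by
    rw [hr i]; exact Finset.sum_nonneg (fun j _ => hp.1 j)
  have hrsum : ∑ i, r i = 1 := by
    rw [Finset.sum_congr rfl (fun i _ => hr i), hfib, hp.2]
  have hcard : ∀ i : Fin ((n + m - 1) / m),
      (Finset.univ.filter fun j : Fin n =>
        (i : ℕ) * m ≤ (j : ℕ) ∧ (j : ℕ) < ((i : ℕ) + 1) * m).card ≤ m := by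
    intro i
    have h1 : (Finset.univ.filter fun j : Fin n =>
        (i : ℕ) * m ≤ (j : ℕ) ∧ (j : ℕ) < ((i : ℕ) + 1) * m).card
        ≤ (Finset.Ico ((i : ℕ) * m) (((i : ℕ) + 1) * m)).card := by
      refine Finset.card_le_card_of_injOn (fun j => (j : ℕ))
        (fun j hj => ?_) (fun a _ b _ h => Fin.ext h)
      rcases Finset.mem_filter.1 hj with ⟨_, ha, hb⟩
      exact Finset.mem_Ico.2 ⟨ha, hb⟩
    rw [Nat.card_Ico] at h1
    have h2 : ((i : ℕ) + 1) * m = (i : ℕ) * m + m := by ring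
    omega
  have hanti : Antitone r := by
    intro i i' hii'
    have hle : (i : ℕ) ≤ (i' : ℕ) := hii'
    set d := ((i' : ℕ) - (i : ℕ)) * m with hd
    have hdi : d + (i : ℕ) * m = (i' : ℕ) * m := by
      rw [hd, ← Nat.add_mul, Nat.sub_add_cancel hle]
    have e1 : ((i : ℕ) + 1) * m = (i : ℕ) * m + m := by ring
    have e2 : ((i' : ℕ) + 1) * m = (i' : ℕ) * m + m := by ring
    set emap : Fin n → Fin n :=
      fun j => ⟨(j : ℕ) - d, lt_of_le_of_lt (Nat.sub_le _ _) j.isLt⟩ with hemap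
    rw [hr i, hr i']
    calc ∑ j ∈ Finset.univ.filter (fun j : Fin n =>
            (i' : ℕ) * m ≤ (j : ℕ) ∧ (j : ℕ) < ((i' : ℕ) + 1) * m), p j
        ≤ ∑ j ∈ Finset.univ.filter (fun j : Fin n =>
            (i' : ℕ) * m ≤ (j : ℕ) ∧ (j : ℕ) < ((i' : ℕ) + 1) * m), p (emap j) := by
          apply Finset.sum_le_sum
          intro j hj
          exact hpm (Fin.le_def.2 (Nat.sub_le _ _))
      _ = ∑ j' ∈ (Finset.univ.filter (fun j : Fin n =>
            (i' : ℕ) * m ≤ (j : ℕ) ∧ (j : ℕ) < ((i' : ℕ) + 1) * m)).image emap, p j' := by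
          refine (Finset.sum_image ?_).symm
          intro a ha b hb hab
          rcases Finset.mem_filter.1 ha with ⟨_, ha1, ha2⟩
          rcases Finset.mem_filter.1 hb with ⟨_, hb1, hb2⟩
          have hv := congrArg Fin.val hab
          simp only [hemap] at hv
          apply Fin.ext
          omega
      _ ≤ ∑ j ∈ Finset.univ.filter (fun j : Fin n =>
            (i : ℕ) * m ≤ (j : ℕ) ∧ (j : ℕ) < ((i : ℕ) + 1) * m), p j := by
          apply Finset.sum_le_sum_of_subset_of_nonneg
          · intro j' hj'
            rcases Finset.mem_image.1 hj' with ⟨j, hj, rfl⟩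
            rcases Finset.mem_filter.1 hj with ⟨_, h1, h2⟩
            refine Finset.mem_filter.2 ⟨Finset.mem_univ _, ?_, ?_⟩
            · show (i : ℕ) * m ≤ (j : ℕ) - d
              omega
            · show (j : ℕ) - d < ((i : ℕ) + 1) * m
              omega
          · intro j _ _
            exact hp.1 j
  refine ⟨⟨hrn, hrsum⟩, hanti, ?_⟩
  unfold shannonEntropy
  rw [← hfib (fun j => if p j = 0 then 0 else p j * Real.logb 2 (p j)⁻¹)]
  have hstep : ∀ i : Fin ((n + m - 1) / m),
      ∑ j ∈ Finset.univ.filter (fun j : Fin n =>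
          (i : ℕ) * m ≤ (j : ℕ) ∧ (j : ℕ) < ((i : ℕ) + 1) * m),
        (if p j = 0 then 0 else p j * Real.logb 2 (p j)⁻¹)
      ≤ (if r i = 0 then 0 else r i * Real.logb 2 (r i)⁻¹) + r i * Real.logb 2 m := by
    intro i
    have h := block_entropy_le (Finset.univ.filter (fun j : Fin n =>
        (i : ℕ) * m ≤ (j : ℕ) ∧ (j : ℕ) < ((i : ℕ) + 1) * m)) p
      (fun j _ => hp.1 j) m hm (hcard i)
    rwa [← hr i] at h
  calc ∑ i : Fin ((n + m - 1) / m), ∑ j ∈ Finset.univ.filter (fun j : Fin n =>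
          (i : ℕ) * m ≤ (j : ℕ) ∧ (j : ℕ) < ((i : ℕ) + 1) * m),
        (if p j = 0 then 0 else p j * Real.logb 2 (p j)⁻¹)
      ≤ ∑ i, ((if r i = 0 then 0 else r i * Real.logb 2 (r i)⁻¹) + r i * Real.logb 2 m) :=
        Finset.sum_le_sum (fun i _ => hstep i)
    _ = (∑ i, if r i = 0 then 0 else r i * Real.logb 2 (r i)⁻¹) + (∑ i, r i) * Real.logb 2 m := by
        rw [Finset.sum_add_distrib, ← Finset.sum_mul]
    _ = shannonEntropy r + Real.logb 2 m := by rw [hrsum, one_mul]; rfl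
end

section
/- Let A be an n×n nonnegative column-stochastic matrix with at most m nonzero entries in each row and column, let p, q ∈ Δₙ be nonincreasing probability vectors with Ap = q, and let r = Bp where B is the n×n 0-1 block matrix with b_{ij} = 1 iff (i−1)m < j ≤ min(im, n). Then the vector r majorizes q. -/
open scoped BigOperators
open Classical Filter

lemma sum_subset_le_initial {n : ℕ} (p : Fin n → ℝ)
    (hpm : Antitone p) (S : Finset (Fin n)) :
    ∑ j ∈ S, p j ≤ ∑ j ∈ Finset.univ.filter (fun j : Fin n => (j : ℕ) < S.card), p j := by
  set s := S.card with hs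
  have hsn : s ≤ n := by
    simpa using (Finset.card_le_card (Finset.subset_univ S))
  set f : Fin s ↪o Fin n := S.orderEmbOfFin rfl with hfdef
  have hrange : ∀ k : Fin s, f k ∈ S := fun k => Finset.orderEmbOfFin_mem S rfl k
  have hle : ∀ a : ℕ, ∀ ha : a < s, a ≤ ((f ⟨a, ha⟩ : Fin n) : ℕ) := by
    intro a
    induction a with
    | zero => intro ha; exact Nat.zero_le _
    | succ b ih =>
      intro ha
      have hb : b < s := Nat.lt_of_succ_lt ha
      have h1 : ((f ⟨b, hb⟩ : Fin n) : ℕ) < ((f ⟨b + 1, ha⟩ : Fin n) : ℕ) :=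
        f.strictMono (by simp [Fin.lt_def])
      have := ih hb
      omega
  have himg : Finset.univ.image (fun k : Fin s => (f k : Fin n)) = S := by
    apply Finset.eq_of_subset_of_card_le
    · intro x hx
      simp only [Finset.mem_image] at hx
      obtain ⟨k, _, rfl⟩ := hx
      exact hrange k
    · rw [Finset.card_image_of_injective _ f.injective]
      simp [hs]
  have hLHS : ∑ j ∈ S, p j = ∑ k : Fin s, p (f k) := by
    rw [← himg, Finset.sum_image (fun a _ b _ h => f.injective h)]
  have himg2 : Finset.univ.image (Fin.castLE hsn) =
      Finset.univ.filter (fun j : Fin n => (j : ℕ) < s) := by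
    ext j
    simp only [Finset.mem_image, Finset.mem_filter, Finset.mem_univ, true_and]
    constructor
    · rintro ⟨k, -, rfl⟩; exact k.2
    · intro hj; exact ⟨⟨(j : ℕ), hj⟩, rfl⟩
  have hRHS : ∑ j ∈ Finset.univ.filter (fun j : Fin n => (j : ℕ) < s), p j
      = ∑ k : Fin s, p (Fin.castLE hsn k) := by
    rw [← himg2, Finset.sum_image (fun a _ b _ h => Fin.castLE_injective hsn h)]
  rw [hLHS, hRHS]
  apply Finset.sum_le_sum
  intro k _
  exact hpm (by simpa [Fin.le_def] using hle k k.2)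

theorem block_matrix_majorizes (n m : ℕ) (hm : 0 < m)
    (A : Matrix (Fin n) (Fin n) ℝ)
    (hA0 : ∀ i j, 0 ≤ A i j) (hA1 : ∀ j, ∑ i, A i j = 1)
    (hAr : ∀ i, (Finset.univ.filter fun j => A i j ≠ 0).card ≤ m)
    (hAc : ∀ j, (Finset.univ.filter fun i => A i j ≠ 0).card ≤ m)
    (p q : Fin n → ℝ) (hp : IsProbVec p) (hq : IsProbVec q)
    (hpm : Antitone p) (hqm : Antitone q)
    (hpq : A.mulVec p = q)
    (B : Matrix (Fin n) (Fin n) ℝ)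
    (hB : ∀ i j, B i j = if (i : ℕ) * m ≤ (j : ℕ) ∧ (j : ℕ) < ((i : ℕ) + 1) * m then 1 else 0)
    (r : Fin n → ℝ) (hrdef : r = B.mulVec p) :
    (∑ i, r i = ∑ i, q i) ∧
    (∀ t : ℕ, t ≤ n →
      ∑ i ∈ Finset.univ.filter (fun i : Fin n => (i : ℕ) < t), q i ≤
      ∑ i ∈ Finset.univ.filter (fun i : Fin n => (i : ℕ) < t), r i) := by
  subst hrdef
  subst hpq
  -- sum of r over an initial segment equals sum of p over an initial segment
  have hBsum : ∀ t : ℕ,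
      ∑ i ∈ Finset.univ.filter (fun i : Fin n => (i : ℕ) < t), B.mulVec p i
      = ∑ j ∈ Finset.univ.filter (fun j : Fin n => (j : ℕ) < t * m), p j := by
    intro t
    simp only [Matrix.mulVec, dotProduct]
    rw [Finset.sum_comm, Finset.sum_filter]
    apply Finset.sum_congr rfl
    intro j _
    have hj0 : (j : ℕ) / m < n := lt_of_le_of_lt (Nat.div_le_self _ _) j.2
    set i₀ : Fin n := ⟨(j : ℕ) / m, hj0⟩ with hi₀
    have hBj : ∀ i : Fin n, B i j = if i = i₀ then 1 else 0 := by
      intro i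
      rw [hB]
      by_cases h : (i : ℕ) * m ≤ (j : ℕ) ∧ (j : ℕ) < ((i : ℕ) + 1) * m
      · rw [if_pos h, if_pos]
        exact Fin.ext (Nat.div_eq_of_lt_le h.1 h.2).symm
      · rw [if_neg h, if_neg]
        intro he
        apply h
        have hv : (i : ℕ) = (j : ℕ) / m := by rw [he]
        constructor
        · rw [hv]; exact Nat.div_mul_le_self _ _
        · rw [hv, Nat.succ_mul]
          exact Nat.lt_div_mul_add hm
    calc ∑ i ∈ Finset.univ.filter (fun i : Fin n => (i : ℕ) < t), B i j * p j
        = ∑ i ∈ Finset.univ.filter (fun i : Fin n => (i : ℕ) < t),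
            (if i = i₀ then 1 else 0) * p j := by
          apply Finset.sum_congr rfl; intro i _; rw [hBj]
      _ = if (j : ℕ) < t * m then p j else 0 := by
          simp only [ite_mul, one_mul, zero_mul, Finset.sum_ite_eq']
          have : ((j : ℕ) / m < t) ↔ ((j : ℕ) < t * m) := Nat.div_lt_iff_lt_mul hm
          simp [hi₀, this]
  constructor
  · have h1 := hBsum n
    have e1 : Finset.univ.filter (fun i : Fin n => (i : ℕ) < n) = Finset.univ := by
      apply Finset.filter_true_of_mem; intro i _; exact i.2
    have e2 : Finset.univ.filter (fun j : Fin n => (j : ℕ) < n * m) = Finset.univ := by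
      apply Finset.filter_true_of_mem; intro j _
      calc (j : ℕ) < n := j.2
        _ ≤ n * m := Nat.le_mul_of_pos_right _ hm
    rw [e1, e2] at h1
    rw [h1, hp.2]
    -- ∑ q = 1
    rw [hq.2]
  · intro t ht
    set F := Finset.univ.filter (fun i : Fin n => (i : ℕ) < t) with hF
    have hFcard : F.card ≤ t := by
      have h := Finset.card_le_card_of_injOn (s := F) (t := Finset.range t)
        (fun i : Fin n => (i : ℕ))
        (by intro i hi
            rw [hF, Finset.mem_coe, Finset.mem_filter] at hi
            exact Finset.mem_coe.mpr (Finset.mem_range.mpr hi.2))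
        (by intro a _ b _ h; exact Fin.ext h)
      simpa using h
    set S : Finset (Fin n) := F.biUnion
      (fun i => Finset.univ.filter (fun j => A i j ≠ 0)) with hS
    have hScard : S.card ≤ t * m := by
      calc S.card ≤ ∑ i ∈ F, (Finset.univ.filter (fun j => A i j ≠ 0)).card :=
            Finset.card_biUnion_le
        _ ≤ ∑ _i ∈ F, m := Finset.sum_le_sum (fun i _ => hAr i)
        _ = F.card * m := by rw [Finset.sum_const, smul_eq_mul]
        _ ≤ t * m := Nat.mul_le_mul_right m hFcard
    have hqsum : ∑ i ∈ F, A.mulVec p i = ∑ j ∈ S, (∑ i ∈ F, A i j) * p j := by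
      simp only [Matrix.mulVec, dotProduct]
      rw [Finset.sum_comm]
      have hpull : ∀ j : Fin n, ∑ i ∈ F, A i j * p j = (∑ i ∈ F, A i j) * p j :=
        fun j => (Finset.sum_mul F (fun i => A i j) (p j)).symm
      calc ∑ j : Fin n, ∑ i ∈ F, A i j * p j
          = ∑ j : Fin n, (∑ i ∈ F, A i j) * p j := Finset.sum_congr rfl (fun j _ => hpull j)
        _ = ∑ j ∈ S, (∑ i ∈ F, A i j) * p j := by
            symm
            apply Finset.sum_subset (Finset.subset_univ S)
            intro j _ hjS
            have hzero : (∑ i ∈ F, A i j) = 0 := by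
              apply Finset.sum_eq_zero
              intro i hi
              by_contra hne
              exact hjS (Finset.mem_biUnion.mpr ⟨i, hi, by simp [hne]⟩)
            rw [hzero, zero_mul]
    calc ∑ i ∈ F, A.mulVec p i = ∑ j ∈ S, (∑ i ∈ F, A i j) * p j := hqsum
      _ ≤ ∑ j ∈ S, p j := by
          apply Finset.sum_le_sum
          intro j _
          have hc1 : (∑ i ∈ F, A i j) ≤ 1 := by
            rw [← hA1 j]
            exact Finset.sum_le_sum_of_subset_of_nonneg (Finset.subset_univ F)
              (fun i _ _ => hA0 i j)
          have hc0 : 0 ≤ ∑ i ∈ F, A i j := Finset.sum_nonneg (fun i _ => hA0 i j)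
          calc (∑ i ∈ F, A i j) * p j ≤ 1 * p j :=
                mul_le_mul_of_nonneg_right hc1 (hp.1 j)
            _ = p j := one_mul _
      _ ≤ ∑ j ∈ Finset.univ.filter (fun j : Fin n => (j : ℕ) < S.card), p j :=
          sum_subset_le_initial p hpm S
      _ ≤ ∑ j ∈ Finset.univ.filter (fun j : Fin n => (j : ℕ) < t * m), p j := by
          apply Finset.sum_le_sum_of_subset_of_nonneg
          · intro j hj
            simp only [Finset.mem_filter, Finset.mem_univ, true_and] at hj ⊢
            omega
          · intro j _ _; exact hp.1 j
      _ = ∑ i ∈ F, B.mulVec p i := (hBsum t).symm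
end

section
/- The Shannon entropy function H: Δₙ → [0, log n] is δ-contractive: for all probability measures p, q on {1,...,n}, |H(p) − H(q)| ≤ δ(p,q), where δ is the logarithmic dispersion. -/
open scoped BigOperators
open Classical Filter

section EntropyAux
open Finset

noncomputable def phi (x : ℝ) : ℝ := if x = 0 then 0 else x * Real.logb 2 x⁻¹

lemma concave_logb2 : ConcaveOn ℝ (Set.Ioi 0) (Real.logb 2) := by
  have h := strictConcaveOn_log_Ioi.concaveOn.smul
    (c := (Real.log 2)⁻¹) (by positivity)
  have e : Real.logb 2 = fun x => (Real.log 2)⁻¹ • Real.log x := by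
    funext x
    simp [Real.logb, div_eq_inv_mul, smul_eq_mul]
  rw [e]; exact h

/-- Jensen row bound. -/
lemma row_bound {Ω : Type*} [Fintype Ω] (x : Ω → ℝ) (hx : ∀ j, 0 ≤ x j) (m : ℕ)
    (hcard : (Finset.univ.filter fun j => x j ≠ 0).card ≤ m) :
    ∑ j, phi (x j) ≤ phi (∑ j, x j) + (∑ j, x j) * Real.logb 2 m := by
  set c := ∑ j, x j with hc
  have hc0 : 0 ≤ c := Finset.sum_nonneg fun j _ => hx j
  rcases eq_or_lt_of_le hc0 with h0 | hpos
  · have hz : ∀ j, x j = 0 := by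
      intro j
      have := (Finset.sum_eq_zero_iff_of_nonneg (fun j _ => hx j)).mp h0.symm
      exact this j (mem_univ j)
    simp [phi, hz, ← h0]
  · set T := Finset.univ.filter fun j => x j ≠ 0 with hT
    have hxT : ∀ j ∈ T, 0 < x j := by
      intro j hj
      exact lt_of_le_of_ne (hx j) (Ne.symm (by simpa [hT] using hj))
    have hsumT : ∑ j ∈ T, x j = c := by
      rw [hc]
      exact Finset.sum_filter_ne_zero _
    have hTne : T.Nonempty := by
      by_contra h
      rw [Finset.not_nonempty_iff_eq_empty] at h
      rw [h] at hsumT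
      simp at hsumT; linarith
    have hm1 : 1 ≤ m := le_trans (Finset.card_pos.mpr hTne) hcard
    -- Jensen
    have jensen : ∑ j ∈ T, (x j / c) * Real.logb 2 (c / x j) ≤ Real.logb 2 (T.card) := by
      have := concave_logb2.le_map_sum (t := T) (w := fun j => x j / c)
        (p := fun j => c / x j)
        (fun j _ => div_nonneg (hx j) hc0)
        (by rw [← Finset.sum_div, hsumT, div_self hpos.ne'])
        (fun j hj => Set.mem_Ioi.mpr (div_pos hpos (hxT j hj)))
      simp only [smul_eq_mul] at this
      refine this.trans_eq ?_
      congr 1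
      calc ∑ j ∈ T, x j / c * (c / x j) = ∑ j ∈ T, (1:ℝ) := by
            refine Finset.sum_congr rfl fun j hj => ?_
            have h1 := (hxT j hj).ne'
            field_simp
        _ = T.card := by simp
    have jensen2 : ∑ j ∈ T, x j * Real.logb 2 (c / x j) ≤ c * Real.logb 2 m := by
      have hlog : Real.logb 2 (T.card) ≤ Real.logb 2 m := by
        apply Real.logb_le_logb_of_le one_lt_two
        · exact_mod_cast Finset.card_pos.mpr hTne
        · exact_mod_cast hcard
      calc ∑ j ∈ T, x j * Real.logb 2 (c / x j)
          = c * ∑ j ∈ T, (x j / c) * Real.logb 2 (c / x j) := by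
            rw [Finset.mul_sum]
            refine Finset.sum_congr rfl fun j hj => ?_
            have h1 := (hxT j hj).ne'
            field_simp
        _ ≤ c * Real.logb 2 m := by
            exact mul_le_mul_of_nonneg_left (jensen.trans hlog) hc0
    have expand : ∀ j ∈ T, x j * Real.logb 2 (x j)⁻¹
        = x j * Real.logb 2 (c / x j) + x j * Real.logb 2 c⁻¹ := by
      intro j hj
      have hxj := hxT j hj
      rw [← mul_add, ← Real.logb_mul (by positivity) (by positivity)]
      congr 2
      field_simp
    have lhs_eq : ∑ j, phi (x j) = ∑ j ∈ T, x j * Real.logb 2 (x j)⁻¹ := by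
      rw [← Finset.sum_filter_of_ne (p := fun j => x j ≠ 0)]
      · simp only [phi]
        refine Finset.sum_congr rfl fun j hj => ?_
        rw [if_neg (by simpa [hT] using hj)]
      · intro j _ h
        simp only [phi] at h
        by_contra hz
        simp [hz] at h
    rw [lhs_eq, Finset.sum_congr rfl expand, Finset.sum_add_distrib, ← Finset.sum_mul, hsumT]
    have : phi c = c * Real.logb 2 c⁻¹ := by rw [phi, if_neg hpos.ne']
    linarith

lemma marg_bound {Ω : Type*} [Fintype Ω] (y : Ω → ℝ) (hy : ∀ i, 0 ≤ y i) :
    phi (∑ i, y i) ≤ ∑ i, phi (y i) := by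
  set c := ∑ i, y i with hc
  have hc0 : 0 ≤ c := Finset.sum_nonneg fun i _ => hy i
  rcases eq_or_lt_of_le hc0 with h0 | hpos
  · have hz : ∀ i, y i = 0 := fun i =>
      (Finset.sum_eq_zero_iff_of_nonneg (fun i _ => hy i)).mp h0.symm i (mem_univ i)
    simp [phi, hz, ← h0]
  · have term : ∀ i, y i * Real.logb 2 c⁻¹ ≤ phi (y i) := by
      intro i
      rcases eq_or_lt_of_le (hy i) with h | h
      · simp [phi, ← h]
      · rw [phi, if_neg h.ne']
        refine mul_le_mul_of_nonneg_left ?_ (hy i)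
        apply Real.logb_le_logb_of_le one_lt_two (by positivity)
        exact inv_anti₀ h (Finset.single_le_sum (fun i _ => hy i) (mem_univ i))
    calc phi c = c * Real.logb 2 c⁻¹ := by rw [phi, if_neg hpos.ne']
      _ = ∑ i, y i * Real.logb 2 c⁻¹ := by rw [← Finset.sum_mul]
      _ ≤ ∑ i, phi (y i) := Finset.sum_le_sum fun i _ => term i

lemma joint_le {Ω : Type*} [Fintype Ω] (P : Ω → Ω → ℝ) (hP : ∀ i j, 0 ≤ P i j) (m : ℕ)
    (hcard : ∀ i, (Finset.univ.filter fun j => P i j ≠ 0).card ≤ m)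
    (hsum : ∑ i, ∑ j, P i j = 1) :
    ∑ i, ∑ j, phi (P i j) ≤ ∑ i, phi (∑ j, P i j) + Real.logb 2 m := by
  calc ∑ i, ∑ j, phi (P i j)
      ≤ ∑ i, (phi (∑ j, P i j) + (∑ j, P i j) * Real.logb 2 m) :=
        Finset.sum_le_sum fun i _ => row_bound (P i) (hP i) m (hcard i)
    _ = ∑ i, phi (∑ j, P i j) + (∑ i, ∑ j, P i j) * Real.logb 2 m := by
        rw [Finset.sum_add_distrib, Finset.sum_mul]
    _ = ∑ i, phi (∑ j, P i j) + Real.logb 2 m := by rw [hsum, one_mul]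

lemma one_sided {Ω : Type*} [Fintype Ω] (P : Ω → Ω → ℝ) (hP : ∀ i j, 0 ≤ P i j) (m : ℕ)
    (hcard : ∀ i, (Finset.univ.filter fun j => P i j ≠ 0).card ≤ m)
    (hsum : ∑ i, ∑ j, P i j = 1) :
    ∑ j, phi (∑ i, P i j) ≤ ∑ i, phi (∑ j, P i j) + Real.logb 2 m := by
  calc ∑ j, phi (∑ i, P i j) ≤ ∑ j, ∑ i, phi (P i j) :=
        Finset.sum_le_sum fun j _ => marg_bound _ (fun i => hP i j)
    _ = ∑ i, ∑ j, phi (P i j) := Finset.sum_comm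
    _ ≤ ∑ i, phi (∑ j, P i j) + Real.logb 2 m := joint_le P hP m hcard hsum

end EntropyAux

theorem entropy_logDisp_contractive (n : ℕ) (hn : 0 < n) (p q : Fin n → ℝ)
    (hp : IsProbVec p) (hq : IsProbVec q) :
    |shannonEntropy p - shannonEntropy q| ≤ logDisp p q := by
  suffices h : |shannonEntropy p - shannonEntropy q| ≤ Real.logb 2
      ((sInf {m : ℕ | 0 < m ∧ ∃ A, DispWitness m A p q} : ℕ) : ℝ) from h

  set S := {m : ℕ | 0 < m ∧ ∃ A, DispWitness m A p q} with hS
  have hnS : n ∈ S := by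
    refine ⟨hn, Matrix.of fun i _ => q i, fun i j => hq.1 i, fun j => hq.2, ?_, ?_, ?_⟩
    · funext i
      simp [Matrix.mulVec, dotProduct, ← Finset.mul_sum, hp.2]
    · intro i
      exact le_trans (Finset.card_filter_le _ _) (by simp)
    · intro j
      exact le_trans (Finset.card_filter_le _ _) (by simp)
  obtain ⟨hm0, A, hAnn, hAcol, hAmul, hArow, hAcolc⟩ := Nat.sInf_mem ⟨n, hnS⟩
  set m := sInf S with hm
  set P : Fin n → Fin n → ℝ := fun i j => A i j * p j with hPdef
  have hPnn : ∀ i j, 0 ≤ P i j := fun i j => mul_nonneg (hAnn i j) (hp.1 j)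
  have hcols : ∀ j, ∑ i, P i j = p j := by
    intro j; rw [← Finset.sum_mul, hAcol, one_mul]
  have hrows : ∀ i, ∑ j, P i j = q i := by
    intro i
    rw [← congrFun hAmul i]
    rfl
  have htot : ∑ i, ∑ j, P i j = 1 := by
    simp only [hrows]; exact hq.2
  have hrowc : ∀ i, (Finset.univ.filter fun j => P i j ≠ 0).card ≤ m := by
    intro i
    refine le_trans (Finset.card_le_card ?_) (hArow i)
    intro j hj
    have hj' : P i j ≠ 0 := (Finset.mem_filter.mp hj).2
    exact Finset.mem_filter.mpr ⟨Finset.mem_univ j, fun h => hj' (by simp [hPdef, h])⟩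
  have hcolc : ∀ j, (Finset.univ.filter fun i => P i j ≠ 0).card ≤ m := by
    intro j
    refine le_trans (Finset.card_le_card ?_) (hAcolc j)
    intro i hi
    have hi' : P i j ≠ 0 := (Finset.mem_filter.mp hi).2
    exact Finset.mem_filter.mpr ⟨Finset.mem_univ i, fun h => hi' (by simp [hPdef, h])⟩
  have hHp : shannonEntropy p = ∑ w, phi (p w) := rfl
  have hHq : shannonEntropy q = ∑ w, phi (q w) := rfl
  have h1 : shannonEntropy p - shannonEntropy q ≤ Real.logb 2 m := by
    have := one_sided P hPnn m hrowc htot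
    simp only [hcols, hrows] at this
    rw [hHp, hHq]; linarith
  have h2 : shannonEntropy q - shannonEntropy p ≤ Real.logb 2 m := by
    have := one_sided (fun i j => P j i) (fun i j => hPnn j i) m hcolc
      (by rw [Finset.sum_comm]; exact htot)
    simp only [hcols, hrows] at this
    rw [hHp, hHq]; linarith
  rw [abs_sub_le_iff]
  exact ⟨h1, h2⟩
end

section
/- Finite-state dimension is δ⁺-contractive: for all sequences S, T over alphabet Σ = {0,...,k−1}, |dim_FS(S) − dim_FS(T)| ≤ δ⁺(S,T), where δ⁺ is the normalized upper logarithmic block dispersion. -/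
open scoped BigOperators
open Classical Filter

noncomputable def deltaPlus (k : ℕ) (S T : ℕ → Fin k) : ℝ :=
  Filter.limsup (fun l : ℕ =>
    (1 / ((l : ℝ) * Real.logb 2 k)) *
      Filter.limsup (fun n => logDisp (blockFreq k l S n) (blockFreq k l T n)) Filter.atTop)
    Filter.atTop


section AuxAll
open Finset


section Ent
variable {Ω : Type*} [Fintype Ω]

/-- Natural-log entropy. -/
noncomputable def ent (p : Ω → ℝ) : ℝ := ∑ w, Real.negMulLog (p w)

lemma ent_nonneg {p : Ω → ℝ} (h0 : ∀ w, 0 ≤ p w) (h1 : ∀ w, p w ≤ 1) : 0 ≤ ent p :=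
  Finset.sum_nonneg fun w _ => Real.negMulLog_nonneg (h0 w) (h1 w)

lemma gibbs {p q : Ω → ℝ} (hp0 : ∀ w, 0 ≤ p w) (hp1 : ∑ w, p w = 1)
    (hq0 : ∀ w, 0 ≤ q w) (hq1 : ∑ w, q w ≤ 1) (hdom : ∀ w, p w ≠ 0 → q w ≠ 0) :
    ent p ≤ ∑ w, p w * Real.log (q w)⁻¹ := by
  have key : ∀ w, Real.negMulLog (p w) ≤ p w * Real.log (q w)⁻¹ + (q w - p w) := by
    intro w
    by_cases h : p w = 0
    · simp [h, hq0 w]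
    · have hp : 0 < p w := lt_of_le_of_ne (hp0 w) (Ne.symm h)
      have hq : 0 < q w := lt_of_le_of_ne (hq0 w) (Ne.symm (hdom w h))
      have hlog : Real.log (q w / p w) ≤ q w / p w - 1 :=
        Real.log_le_sub_one_of_pos (div_pos hq hp)
      have : p w * Real.log (q w / p w) ≤ q w - p w := by
        have := mul_le_mul_of_nonneg_left hlog hp.le
        calc p w * Real.log (q w / p w) ≤ p w * (q w / p w - 1) := this
          _ = q w - p w := by field_simp
      have hsplit : Real.log (q w / p w) = Real.log (p w)⁻¹ - Real.log (q w)⁻¹ := by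
        rw [Real.log_div hq.ne' hp.ne', Real.log_inv, Real.log_inv]; ring
      have hneg : Real.negMulLog (p w) = p w * Real.log (p w)⁻¹ := by
        rw [Real.log_inv, Real.negMulLog]; ring
      rw [hsplit, mul_sub] at this
      linarith
  calc ent p ≤ ∑ w, (p w * Real.log (q w)⁻¹ + (q w - p w)) :=
        Finset.sum_le_sum fun w _ => key w
    _ = (∑ w, p w * Real.log (q w)⁻¹) + ((∑ w, q w) - (∑ w, p w)) := by
        rw [Finset.sum_add_distrib, Finset.sum_sub_distrib]
    _ ≤ ∑ w, p w * Real.log (q w)⁻¹ := by rw [hp1]; linarith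

lemma ent_le_log_card {p : Ω → ℝ} (hp0 : ∀ w, 0 ≤ p w) (hp1 : ∑ w, p w = 1)
    {s : Finset Ω} (hs : ∀ w, p w ≠ 0 → w ∈ s) : ent p ≤ Real.log s.card := by
  have hscard : 0 < s.card := by
    rcases Finset.exists_ne_zero_of_sum_ne_zero (by rw [hp1]; norm_num : ∑ w, p w ≠ 0)
      with ⟨w, _, hw⟩
    exact Finset.card_pos.2 ⟨w, hs w hw⟩
  have hcR : (0:ℝ) < s.card := by exact_mod_cast hscard
  have := gibbs (q := fun w => if w ∈ s then ((s.card : ℝ))⁻¹ else 0) hp0 hp1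
    (fun w => by positivity) (by
      rw [Finset.sum_ite_mem, Finset.univ_inter, Finset.sum_const, nsmul_eq_mul,
        mul_inv_cancel₀ hcR.ne'])
    (fun w hw => by simp [hs w hw, hcR.ne'])
  refine this.trans_eq ?_
  calc ∑ w, p w * Real.log (if w ∈ s then ((s.card:ℝ))⁻¹ else 0)⁻¹
      = ∑ w, p w * Real.log s.card := by
        apply Finset.sum_congr rfl; intro w _
        by_cases h : p w = 0
        · simp [h]
        · simp [hs w h]
    _ = Real.log s.card := by rw [← Finset.sum_mul, hp1, one_mul]

lemma negMulLog_sum_le {ι : Type*} (s : Finset ι) (x : ι → ℝ) (hx : ∀ i ∈ s, 0 ≤ x i) :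
    Real.negMulLog (∑ i ∈ s, x i) ≤ ∑ i ∈ s, Real.negMulLog (x i) := by
  classical
  induction s using Finset.induction_on with
  | empty => simp
  | @insert a s' hnotmem ih =>
    rw [Finset.sum_insert hnotmem, Finset.sum_insert hnotmem]
    have ha : 0 ≤ x a := hx a (Finset.mem_insert_self a s')
    have hs' : 0 ≤ ∑ i ∈ s', x i := Finset.sum_nonneg fun i hi => hx i (Finset.mem_insert_of_mem hi)
    have h2 : Real.negMulLog (x a + ∑ i ∈ s', x i) ≤
        Real.negMulLog (x a) + Real.negMulLog (∑ i ∈ s', x i) := by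
      rcases eq_or_lt_of_le ha with h | h
      · simp [← h]
      rcases eq_or_lt_of_le hs' with h' | h'
      · simp [← h']
      have e1 : x a * Real.log (x a) ≤ x a * Real.log (x a + ∑ i ∈ s', x i) :=
        mul_le_mul_of_nonneg_left (Real.log_le_log h (by linarith)) ha
      have e2 : (∑ i ∈ s', x i) * Real.log (∑ i ∈ s', x i) ≤
          (∑ i ∈ s', x i) * Real.log (x a + ∑ i ∈ s', x i) :=
        mul_le_mul_of_nonneg_left (Real.log_le_log h' (by linarith)) hs'
      simp only [Real.negMulLog]
      nlinarith
    exact h2.trans (by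
      have := ih (fun i hi => hx i (Finset.mem_insert_of_mem hi))
      linarith)

lemma negMulLog_add_le {a b : ℝ} (ha : 0 ≤ a) (hb : 0 ≤ b) :
    Real.negMulLog (a + b) ≤ Real.negMulLog a + Real.negMulLog b := by
  have := negMulLog_sum_le (s := ({0,1} : Finset (Fin 2))) (x := ![a,b]) (by
    intro i _; fin_cases i <;> simpa)
  simpa using this

lemma ent_mix_le {p q : Ω → ℝ} (hp1 : ∑ w, p w = 1) (hq1 : ∑ w, q w = 1)
    {a b : ℝ} (ha : 0 ≤ a) (hb : 0 ≤ b) (hp0 : ∀ w, 0 ≤ p w) (hq0 : ∀ w, 0 ≤ q w) :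
    ent (fun w => a * p w + b * q w) ≤
      a * ent p + b * ent q + Real.negMulLog a + Real.negMulLog b := by
  have key : ∀ w, Real.negMulLog (a * p w + b * q w) ≤
      a * Real.negMulLog (p w) + b * Real.negMulLog (q w)
        + p w * Real.negMulLog a + q w * Real.negMulLog b := by
    intro w
    have h1 := negMulLog_add_le (mul_nonneg ha (hp0 w)) (mul_nonneg hb (hq0 w))
    have h2 : Real.negMulLog (a * p w) = p w * Real.negMulLog a + a * Real.negMulLog (p w) :=
      Real.negMulLog_mul a (p w)
    have h3 : Real.negMulLog (b * q w) = q w * Real.negMulLog b + b * Real.negMulLog (q w) :=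
      Real.negMulLog_mul b (q w)
    linarith
  calc ent (fun w => a * p w + b * q w)
      ≤ ∑ w, (a * Real.negMulLog (p w) + b * Real.negMulLog (q w)
        + p w * Real.negMulLog a + q w * Real.negMulLog b) :=
        Finset.sum_le_sum fun w _ => key w
    _ = a * ent p + b * ent q + Real.negMulLog a + Real.negMulLog b := by
        simp only [Finset.sum_add_distrib, ← Finset.mul_sum, ← Finset.sum_mul, hp1, hq1, ent]
        ring

lemma chain_identity {α β : Type*} [Fintype α] [Fintype β] (p : β → ℝ) (A : α → β → ℝ)
    (hA1 : ∀ j, p j ≠ 0 → ∑ i, A i j = 1) :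
    ∑ j, ∑ i, Real.negMulLog (A i j * p j)
      = ∑ j, p j * (∑ i, Real.negMulLog (A i j)) + ent p := by
  rw [ent, ← Finset.sum_add_distrib]
  refine Finset.sum_congr rfl fun j _ => ?_
  by_cases h : p j = 0
  · simp [h]
  · have : ∀ i, Real.negMulLog (A i j * p j)
        = p j * Real.negMulLog (A i j) + A i j * Real.negMulLog (p j) := fun i =>
      Real.negMulLog_mul (A i j) (p j)
    rw [Finset.sum_congr rfl fun i _ => this i, Finset.sum_add_distrib,
      ← Finset.mul_sum, ← Finset.sum_mul, hA1 j h]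
    ring

lemma ent_marg_fst_le {α β : Type*} [Fintype α] [Fintype β] (P : α × β → ℝ)
    (h0 : ∀ x, 0 ≤ P x) :
    ent (fun i => ∑ j, P (i, j)) ≤ ent P := by
  rw [ent, ent, Fintype.sum_prod_type]
  exact Finset.sum_le_sum fun i _ => negMulLog_sum_le _ _ fun j _ => h0 (i, j)

lemma ent_marg_snd_le {α β : Type*} [Fintype α] [Fintype β] (P : α × β → ℝ)
    (h0 : ∀ x, 0 ≤ P x) :
    ent (fun j => ∑ i, P (i, j)) ≤ ent P := by
  rw [ent, ent, Fintype.sum_prod_type_right]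
  exact Finset.sum_le_sum fun j _ => negMulLog_sum_le _ _ fun i _ => h0 (i, j)

lemma abs_ent_sub_le_log [Nonempty Ω] {m : ℕ} {A : Matrix Ω Ω ℝ} {p q : Ω → ℝ}
    (hp : IsProbVec p) (hq : IsProbVec q) (hw : DispWitness m A p q) :
    |ent p - ent q| ≤ Real.log m := by
  obtain ⟨hA0, hAcol, hAmul, hArow, hAcolcard⟩ := hw
  obtain ⟨hp0, hp1⟩ := hp
  obtain ⟨hq0, hq1⟩ := hq
  -- m ≥ 1
  have hm : 1 ≤ m := by
    obtain ⟨j⟩ := ‹Nonempty Ω›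
    rcases Finset.exists_ne_zero_of_sum_ne_zero
      (by rw [hAcol j]; norm_num : ∑ i, A i j ≠ 0) with ⟨i, _, hi⟩
    calc 1 ≤ (Finset.univ.filter fun i => A i j ≠ 0).card :=
          Finset.card_pos.2 ⟨i, Finset.mem_filter.2 ⟨Finset.mem_univ i, hi⟩⟩
      _ ≤ m := hAcolcard j
  have hlogm : 0 ≤ Real.log m := Real.log_nonneg (by exact_mod_cast hm)
  set P : Ω × Ω → ℝ := fun x => A x.1 x.2 * p x.2 with hP
  have hP0 : ∀ x, 0 ≤ P x := fun x => mul_nonneg (hA0 _ _) (hp0 _)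
  have hmargq : ∀ i, ∑ j, P (i, j) = q i := by
    intro i; rw [← hAmul]; simp [Matrix.mulVec, dotProduct, hP]
  have hmargp : ∀ j, ∑ i, P (i, j) = p j := by
    intro j; simp only [hP]; rw [← Finset.sum_mul, hAcol j, one_mul]
  -- column entropies ≤ log m
  have hcolent : ∀ j, ∑ i, Real.negMulLog (A i j) ≤ Real.log m := by
    intro j
    have hb := ent_le_log_card (p := fun i => A i j) (fun i => hA0 i j) (hAcol j)
      (s := Finset.univ.filter fun i => A i j ≠ 0)
      (fun i hi => Finset.mem_filter.2 ⟨Finset.mem_univ i, hi⟩)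
    refine hb.trans ?_
    have hcpos : 0 < ((Finset.univ.filter fun i => A i j ≠ 0).card : ℝ) := by
      rcases Finset.exists_ne_zero_of_sum_ne_zero
        (by rw [hAcol j]; norm_num : ∑ i, A i j ≠ 0) with ⟨i, _, hi⟩
      exact_mod_cast Finset.card_pos.2 ⟨i, Finset.mem_filter.2 ⟨Finset.mem_univ i, hi⟩⟩
    exact Real.log_le_log hcpos (by exact_mod_cast hAcolcard j)
  -- ent P ≤ ent p + log m
  have hPp : ent P ≤ ent p + Real.log m := by
    have : ent P = ∑ j, ∑ i, Real.negMulLog (A i j * p j) := by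
      rw [ent, Fintype.sum_prod_type, Finset.sum_comm]
    rw [this, chain_identity p A (fun j _ => hAcol j)]
    have : ∑ j, p j * (∑ i, Real.negMulLog (A i j)) ≤ ∑ j, p j * Real.log m :=
      Finset.sum_le_sum fun j _ => mul_le_mul_of_nonneg_left (hcolent j) (hp0 j)
    rw [← Finset.sum_mul, hp1, one_mul] at this
    linarith
  -- ent P ≤ ent q + log m  (row conditionals)
  set B : Ω → Ω → ℝ := fun j i => if q i = 0 then 0 else A i j * p j / q i with hB
  have hProw : ∀ i j, q i = 0 → P (i, j) = 0 := by
    intro i j hqi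
    have hsum := hmargq i
    rw [hqi] at hsum
    have := (Finset.sum_eq_zero_iff_of_nonneg (fun j _ => hP0 (i, j))).1 hsum j (Finset.mem_univ j)
    exact this
  have hPB : ∀ i j, B j i * q i = P (i, j) := by
    intro i j
    by_cases hqi : q i = 0
    · simp [hB, hqi, hProw i j hqi]
    · simp only [hB, hP, if_neg hqi]
      exact div_mul_cancel₀ _ hqi
  have hB1 : ∀ i, q i ≠ 0 → ∑ j, B j i = 1 := by
    intro i hqi
    have : ∑ j, B j i = (∑ j, P (i, j)) / q i := by
      rw [Finset.sum_div]
      exact Finset.sum_congr rfl fun j _ => by simp only [hB, hP, if_neg hqi]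
    rw [this, hmargq i, div_self hqi]
  have hrowent : ∀ i, q i ≠ 0 → ∑ j, Real.negMulLog (B j i) ≤ Real.log m := by
    intro i hqi
    have hB0 : ∀ j, 0 ≤ B j i := by
      intro j; by_cases hq' : q i = 0
      · simp [hB, hq']
      · have hqpos : 0 < q i := lt_of_le_of_ne (hq0 i) (Ne.symm hq')
        simp only [hB, if_neg hq']
        exact div_nonneg (hP0 (i, j)) hqpos.le
    have hb := ent_le_log_card (p := fun j => B j i) hB0 (hB1 i hqi)
      (s := Finset.univ.filter fun j => A i j ≠ 0)
      (fun j hj => by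
        refine Finset.mem_filter.2 ⟨Finset.mem_univ j, fun hAij => hj ?_⟩
        simp [hB, hAij])
    refine hb.trans ?_
    rcases Nat.eq_zero_or_pos (Finset.univ.filter fun j => A i j ≠ 0).card with hc | hc
    · rw [hc]; simpa using hlogm
    · exact Real.log_le_log (by exact_mod_cast hc) (by exact_mod_cast hArow i)
  have hPq : ent P ≤ ent q + Real.log m := by
    have hent : ent P = ∑ i, ∑ j, Real.negMulLog (B j i * q i) := by
      rw [ent, Fintype.sum_prod_type]
      exact Finset.sum_congr rfl fun i _ => Finset.sum_congr rfl fun j _ => by rw [hPB]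
    rw [hent]
    have := chain_identity (α := Ω) (β := Ω) q B hB1
    rw [Finset.sum_comm] at this ⊢
    rw [this]
    have hbd : ∑ i, q i * (∑ j, Real.negMulLog (B j i)) ≤ ∑ i, q i * Real.log m := by
      refine Finset.sum_le_sum fun i _ => ?_
      by_cases hqi : q i = 0
      · simp [hqi]
      · exact mul_le_mul_of_nonneg_left (hrowent i hqi) (hq0 i)
    rw [← Finset.sum_mul, hq1, one_mul] at hbd
    linarith
  -- marginals below joint
  have h1 : ent q ≤ ent P := by
    have := ent_marg_fst_le P hP0
    rwa [show (fun i => ∑ j, P (i, j)) = q from funext hmargq] at this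
  have h2 : ent p ≤ ent P := by
    have := ent_marg_snd_le P hP0
    rwa [show (fun j => ∑ i, P (i, j)) = p from funext hmargp] at this
  rw [abs_sub_le_iff]
  constructor <;> linarith


end Ent

lemma shannonEntropy_eq {Ω : Type*} [Fintype Ω] (p : Ω → ℝ) :
    shannonEntropy p = ent p / Real.log 2 := by
  rw [shannonEntropy, ent, Finset.sum_div]
  refine Finset.sum_congr rfl fun w _ => ?_
  by_cases h : p w = 0
  · simp [h]
  · rw [if_neg h, Real.logb, Real.log_inv, Real.negMulLog]
    ring

-- fiber counting
lemma sum_card_fiber {γ : Type*} [Fintype γ] [DecidableEq γ] (s : Finset ℕ) (g : ℕ → γ) :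
    ∑ w : γ, (s.filter fun j => g j = w).card = s.card :=
  (Finset.card_eq_sum_card_fiberwise fun j _ => Finset.mem_univ (g j)).symm

lemma blockFreq_filter_eq (k l : ℕ) (S : ℕ → Fin k) (s : Finset ℕ) (w : Fin l → Fin k) :
    (s.filter fun j => ∀ t : Fin l, S (j * l + (t : ℕ)) = w t)
      = s.filter fun j => (fun t : Fin l => S (j * l + (t : ℕ))) = w :=
  Finset.filter_congr fun j _ => by rw [funext_iff]

lemma blockFreq_sum {k l : ℕ} (S : ℕ → Fin k) {n : ℕ} (hn : 1 ≤ n) :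
    ∑ w, blockFreq k l S n w = 1 := by
  have hnR : ((n:ℝ)) ≠ 0 := by positivity
  rw [show (fun w => blockFreq k l S n w) = blockFreq k l S n from rfl]
  unfold blockFreq
  rw [← Finset.sum_div]
  rw [show ∑ w : Fin l → Fin k,
      ((((Finset.range n).filter fun j => ∀ t : Fin l, S (j * l + (t : ℕ)) = w t).card : ℝ))
      = ((∑ w : Fin l → Fin k,
        (((Finset.range n).filter fun j => ∀ t : Fin l, S (j * l + (t : ℕ)) = w t).card) : ℕ) : ℝ)
    from by push_cast; rfl]
  rw [Finset.sum_congr rfl fun w _ => congrArg Finset.card (blockFreq_filter_eq k l S _ w),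
    sum_card_fiber, Finset.card_range]
  field_simp

lemma blockFreq_nonneg (k l : ℕ) (S : ℕ → Fin k) (n : ℕ) (w : Fin l → Fin k) :
    0 ≤ blockFreq k l S n w := by unfold blockFreq; positivity

lemma blockFreq_le_one (k l : ℕ) (S : ℕ → Fin k) (n : ℕ) (w : Fin l → Fin k) :
    blockFreq k l S n w ≤ 1 := by
  unfold blockFreq
  rcases Nat.eq_zero_or_pos n with h | h
  · simp [h]
  · rw [div_le_one (by exact_mod_cast h)]
    exact_mod_cast (Finset.card_filter_le _ _).trans (le_of_eq (Finset.card_range n))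

lemma blockFreq_isProb {k l : ℕ} (S : ℕ → Fin k) {n : ℕ} (hn : 1 ≤ n) :
    IsProbVec (blockFreq k l S n) :=
  ⟨blockFreq_nonneg k l S n, blockFreq_sum S hn⟩

lemma blockFreq_zero (k l : ℕ) (S : ℕ → Fin k) : blockFreq k l S 0 = fun _ => 0 := by
  funext w; simp [blockFreq]

lemma shannon_zero_vec {Ω : Type*} [Fintype Ω] : shannonEntropy (fun _ : Ω => (0:ℝ)) = 0 := by
  simp [shannonEntropy]

lemma shannon_blockFreq_nonneg (k l : ℕ) (S : ℕ → Fin k) (n : ℕ) :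
    0 ≤ shannonEntropy (blockFreq k l S n) := by
  rw [shannonEntropy_eq]
  exact div_nonneg (ent_nonneg (blockFreq_nonneg k l S n) (blockFreq_le_one k l S n))
    (Real.log_nonneg (by norm_num))

lemma card_fun_fin (k l : ℕ) : (Fintype.card (Fin l → Fin k) : ℝ) = (k:ℝ)^l := by
  rw [Fintype.card_fun, Fintype.card_fin, Fintype.card_fin]; push_cast; ring

lemma shannon_blockFreq_le {k : ℕ} (hk : 2 ≤ k) (l : ℕ) (S : ℕ → Fin k) (n : ℕ) :
    shannonEntropy (blockFreq k l S n) ≤ l * Real.logb 2 k := by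
  have hL : 0 ≤ (l:ℝ) * Real.logb 2 k := by
    have : (0:ℝ) ≤ Real.logb 2 k :=
      Real.logb_nonneg (by norm_num) (by exact_mod_cast hk.trans' (by norm_num))
    positivity
  rcases Nat.eq_zero_or_pos n with h | h
  · rw [h, blockFreq_zero, shannon_zero_vec]; exact hL
  · rw [shannonEntropy_eq]
    have hent := ent_le_log_card (blockFreq_nonneg k l S n) (blockFreq_sum S h)
      (s := Finset.univ) (fun w _ => Finset.mem_univ w)
    have hlog2 : (0:ℝ) < Real.log 2 := Real.log_pos (by norm_num)
    rw [div_le_iff₀ hlog2]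
    refine hent.trans ?_
    rw [Finset.card_univ]
    have : Real.log (Fintype.card (Fin l → Fin k)) = l * Real.log k := by
      rw [show ((Fintype.card (Fin l → Fin k) : ℕ) : ℝ) = (k:ℝ)^l from card_fun_fin k l,
        Real.log_pow]
    rw [this, Real.logb]
    have : (0:ℝ) < Real.log 2 := hlog2
    field_simp
    exact le_rfl

section LD
variable {Ω : Type*} [Fintype Ω]

noncomputable def dispSet (p q : Ω → ℝ) : Set ℕ := {m : ℕ | 0 < m ∧ ∃ A, DispWitness m A p q}

lemma dispWitness_card [Nonempty Ω] {p q : Ω → ℝ} (hp : IsProbVec p) (hq : IsProbVec q) :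
    Fintype.card Ω ∈ dispSet p q := by
  refine ⟨Fintype.card_pos, Matrix.of fun i _ => q i, fun i j => hq.1 i, fun j => hq.2, ?_, ?_, ?_⟩
  · funext i
    show ∑ j, q i * p j = q i
    rw [← Finset.mul_sum, hp.2, mul_one]
  · exact fun i => (Finset.card_filter_le _ _).trans (le_of_eq (Finset.card_univ))
  · exact fun j => (Finset.card_filter_le _ _).trans (le_of_eq (Finset.card_univ))

lemma dispWitness_zero : (1 : ℕ) ∈ dispSet (fun _ : Ω => (0:ℝ)) (fun _ : Ω => (0:ℝ)) := by
  refine ⟨one_pos, (1 : Matrix Ω Ω ℝ), ?_, ?_, ?_, ?_, ?_⟩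
  · intro i j
    by_cases h : i = j <;> simp [Matrix.one_apply, h]
  · intro j
    simp [Matrix.one_apply]
  · funext i
    simp [Matrix.mulVec, dotProduct]
  · intro i
    refine (Finset.card_le_card (fun j hj => ?_)).trans (le_of_eq (Finset.card_singleton i))
    rcases Finset.mem_filter.1 hj with ⟨-, hne⟩
    by_contra hji
    exact hne (Matrix.one_apply_ne' (by simpa using (fun h => hji (by simp [h] : j ∈ ({i} : Finset Ω)))))
  · intro j
    refine (Finset.card_le_card (fun i hi => ?_)).trans (le_of_eq (Finset.card_singleton j))
    rcases Finset.mem_filter.1 hi with ⟨-, hne⟩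
    by_contra hij
    exact hne (Matrix.one_apply_ne (by simpa using (fun h => hij (by simp [h] : i ∈ ({j} : Finset Ω)))))

lemma logDisp_nonneg (p q : Ω → ℝ) : 0 ≤ logDisp p q := by
  unfold logDisp
  by_cases h : {m : ℕ | 0 < m ∧ ∃ A, DispWitness m A p q}.Nonempty
  · have hmem := Nat.sInf_mem h
    have : 1 ≤ sInf {m : ℕ | 0 < m ∧ ∃ A, DispWitness m A p q} := hmem.1
    exact Real.logb_nonneg (by norm_num) (by exact_mod_cast this)
  · rw [Set.not_nonempty_iff_eq_empty.1 h]
    simp [Real.logb]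

lemma logDisp_le_of_mem {p q : Ω → ℝ} {M : ℕ} (hM : M ∈ dispSet p q) :
    logDisp p q ≤ Real.logb 2 M := by
  unfold logDisp
  have hne : {m : ℕ | 0 < m ∧ ∃ A, DispWitness m A p q}.Nonempty := ⟨M, hM⟩
  have hmem := Nat.sInf_mem hne
  have h1 : 1 ≤ sInf {m : ℕ | 0 < m ∧ ∃ A, DispWitness m A p q} := hmem.1
  have h2 : sInf {m : ℕ | 0 < m ∧ ∃ A, DispWitness m A p q} ≤ M := Nat.sInf_le hM
  exact Real.logb_le_logb_of_le (by norm_num) (by exact_mod_cast h1) (by exact_mod_cast h2)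

-- main per-(l,n) bounds
lemma logDisp_blockFreq_nonneg (k l : ℕ) (S T : ℕ → Fin k) (n : ℕ) :
    0 ≤ logDisp (blockFreq k l S n) (blockFreq k l T n) := logDisp_nonneg _ _

lemma logDisp_blockFreq_le {k : ℕ} (hk : 2 ≤ k) (l : ℕ) (S T : ℕ → Fin k) (n : ℕ) :
    logDisp (blockFreq k l S n) (blockFreq k l T n) ≤ l * Real.logb 2 k := by
  have hL : 0 ≤ (l:ℝ) * Real.logb 2 k := by
    have : (0:ℝ) ≤ Real.logb 2 k :=
      Real.logb_nonneg (by norm_num) (by exact_mod_cast hk.trans' (by norm_num))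
    positivity
  rcases Nat.eq_zero_or_pos n with h | h
  · subst h
    rw [blockFreq_zero, blockFreq_zero]
    exact (logDisp_le_of_mem dispWitness_zero).trans (by simpa using hL)
  · haveI : Nonempty (Fin l → Fin k) := ⟨fun _ => S 0⟩
    have hmem := dispWitness_card (blockFreq_isProb (l := l) S h) (blockFreq_isProb (l := l) T h)
    refine (logDisp_le_of_mem hmem).trans ?_
    rw [show ((Fintype.card (Fin l → Fin k) : ℕ) : ℝ) = (k:ℝ)^l from card_fun_fin k l]
    rw [Real.logb, Real.log_pow, Real.logb]
    have h2 : (0:ℝ) < Real.log 2 := Real.log_pos (by norm_num)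
    rw [mul_div_assoc]

lemma abs_shannon_blockFreq_sub_le {k : ℕ} (hk : 2 ≤ k) (l : ℕ) (S T : ℕ → Fin k) (n : ℕ) :
    |shannonEntropy (blockFreq k l S n) - shannonEntropy (blockFreq k l T n)|
      ≤ logDisp (blockFreq k l S n) (blockFreq k l T n) := by
  rcases Nat.eq_zero_or_pos n with h | h
  · subst h
    rw [blockFreq_zero, blockFreq_zero, shannon_zero_vec, sub_self, abs_zero]
    exact logDisp_nonneg _ _
  · haveI : Nonempty (Fin l → Fin k) := ⟨fun _ => S 0⟩
    have hpS := blockFreq_isProb (l := l) S h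
    have hpT := blockFreq_isProb (l := l) T h
    have hne : {m : ℕ | 0 < m ∧ ∃ A, DispWitness m A (blockFreq k l S n) (blockFreq k l T n)}.Nonempty :=
      ⟨Fintype.card (Fin l → Fin k), dispWitness_card hpS hpT⟩
    obtain ⟨hMpos, A, hA⟩ := Nat.sInf_mem hne
    have habs := abs_ent_sub_le_log hpS hpT hA
    rw [shannonEntropy_eq, shannonEntropy_eq, logDisp]
    have h2 : (0:ℝ) < Real.log 2 := Real.log_pos (by norm_num)
    rw [div_sub_div_same, abs_div, abs_of_pos h2, Real.logb]
    gcongr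
end LD

lemma mul_log_inv_eq (x : ℝ) : x * Real.log x⁻¹ = Real.negMulLog x := by
  rw [Real.log_inv, Real.negMulLog]; ring

lemma blockFreq_eq_fiber (k l : ℕ) (S : ℕ → Fin k) (n : ℕ) (w : Fin l → Fin k) :
    blockFreq k l S n w
      = (((Finset.range n).filter fun j => (fun t : Fin l => S (j * l + (t : ℕ))) = w).card : ℝ) / n := by
  unfold blockFreq
  rw [show ((Finset.range n).filter fun j => ∀ t : Fin l, S (j * l + (t : ℕ)) = w t)
      = ((Finset.range n).filter fun j => (fun t : Fin l => S (j * l + (t : ℕ))) = w) from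
    Finset.filter_congr fun j _ => (funext_iff).symm]

theorem shannon_block_mul_le {k : ℕ} (hk : 2 ≤ k) (l m : ℕ) (hl : 1 ≤ l) (hm : 1 ≤ m)
    (S : ℕ → Fin k) (n : ℕ) :
    shannonEntropy (blockFreq k (m * l) S n) ≤ m * shannonEntropy (blockFreq k l S (n * m)) := by
  rcases Nat.eq_zero_or_pos n with rfl | hn
  · rw [Nat.zero_mul, blockFreq_zero, blockFreq_zero, shannon_zero_vec, shannon_zero_vec]
    simp
  have hnR : (0:ℝ) < n := by exact_mod_cast hn
  have hmR : (0:ℝ) < m := by exact_mod_cast hm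
  have hlpos : 0 < l := hl
  have hmpos : 0 < m := hm
  set γ := (Fin l → Fin k)
  set Ω := (Fin (m * l) → Fin k)
  -- sub-block extraction
  have hb : ∀ (i : Fin m) (t : Fin l), (i : ℕ) * l + (t : ℕ) < m * l := by
    intro i t
    calc (i:ℕ) * l + (t:ℕ) < (i:ℕ) * l + l := by omega
      _ = ((i:ℕ) + 1) * l := by ring
      _ ≤ m * l := Nat.mul_le_mul_right l i.2
  set sub : Fin m → Ω → γ := fun i w t => w ⟨(i:ℕ) * l + (t : ℕ), hb i t⟩ with hsub
  set gb : ℕ → Ω := fun j t => S (j * (m * l) + (t : ℕ)) with hgb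
  set subf : Fin m → ℕ → γ := fun i j t => S (j * (m * l) + (i:ℕ) * l + (t : ℕ)) with hsubf
  set ρ : Fin m → γ → ℝ :=
    fun i v => (((Finset.range n).filter fun j => subf i j = v).card : ℝ) / n with hρ
  set P := blockFreq k (m * l) S n with hPdef
  set π := blockFreq k l S (n * m) with hπdef
  have hsub_gb : ∀ (i : Fin m) (j : ℕ), sub i (gb j) = subf i j := by
    intro i j
    funext t
    show S (j * (m * l) + ((i:ℕ) * l + (t:ℕ))) = S (j * (m * l) + (i:ℕ) * l + (t:ℕ))
    congr 1; ring
  have hPfib : ∀ w, P w = (((Finset.range n).filter fun j => gb j = w).card : ℝ) / n := by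
    intro w; rw [hPdef, blockFreq_eq_fiber]
  have hρ1 : ∀ i, ∑ v, ρ i v = 1 := by
    intro i
    rw [hρ, ← Finset.sum_div, div_eq_one_iff_eq hnR.ne']
    exact_mod_cast (sum_card_fiber (Finset.range n) (subf i)).trans (Finset.card_range n)
  have hρ0 : ∀ i v, 0 ≤ ρ i v := fun i v => by rw [hρ]; positivity
  -- fullblock filter ⊆ subblock filter
  have hsubset : ∀ (i : Fin m) (w : Ω),
      ((Finset.range n).filter fun j => gb j = w)
        ⊆ ((Finset.range n).filter fun j => subf i j = sub i w) := by
    intro i w j hj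
    rcases Finset.mem_filter.1 hj with ⟨hjr, hje⟩
    exact Finset.mem_filter.2 ⟨hjr, by rw [← hsub_gb, hje]⟩
  have hPle : ∀ (i : Fin m) (w : Ω), P w ≤ ρ i (sub i w) := by
    intro i w
    rw [hPfib, hρ]
    refine (div_le_div_iff_of_pos_right hnR).2 ?_
    exact_mod_cast Finset.card_le_card (hsubset i w)
  -- marginal identity
  have hmarg : ∀ (i : Fin m) (v : γ),
      ∑ w ∈ Finset.univ.filter (fun w => sub i w = v), P w = ρ i v := by
    intro i v
    have hmaps : ∀ j ∈ (Finset.range n).filter (fun j => subf i j = v),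
        gb j ∈ Finset.univ.filter (fun w => sub i w = v) := by
      intro j hj
      rcases Finset.mem_filter.1 hj with ⟨-, hje⟩
      exact Finset.mem_filter.2 ⟨Finset.mem_univ _, by rw [hsub_gb, hje]⟩
    have hcard := Finset.card_eq_sum_card_fiberwise hmaps
    have hfib : ∀ w ∈ Finset.univ.filter (fun w => sub i w = v),
        ((Finset.range n).filter (fun j => subf i j = v)).filter (fun j => gb j = w)
          = (Finset.range n).filter (fun j => gb j = w) := by
      intro w hw
      rcases Finset.mem_filter.1 hw with ⟨-, hwv⟩
      ext j
      simp only [Finset.mem_filter, Finset.mem_range]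
      constructor
      · rintro ⟨⟨hjn, -⟩, hje⟩; exact ⟨hjn, hje⟩
      · rintro ⟨hjn, hje⟩
        exact ⟨⟨hjn, by rw [← hwv, ← hje, hsub_gb]⟩, hje⟩
    rw [Finset.sum_congr rfl (fun w hw => congrArg Finset.card (hfib w hw))] at hcard
    have : ∑ w ∈ Finset.univ.filter (fun w => sub i w = v), P w
        = (∑ w ∈ Finset.univ.filter (fun w => sub i w = v),
            (((Finset.range n).filter fun j => gb j = w).card : ℝ)) / n := by
      rw [Finset.sum_div]
      exact Finset.sum_congr rfl fun w _ => hPfib w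
    rw [this, hρ]
    congr 1
    exact_mod_cast hcard.symm
  -- the equivalence Ω ≃ (Fin m → γ)
  have hdiv : ∀ s : Fin (m * l), (s : ℕ) / l < m :=
    fun s => (Nat.div_lt_iff_lt_mul hlpos).2 s.2
  have hmod : ∀ s : Fin (m * l), (s : ℕ) % l < l := fun s => Nat.mod_lt _ hlpos
  set e : Ω ≃ (Fin m → γ) :=
    { toFun := fun w i => sub i w
      invFun := fun F s => F ⟨(s : ℕ) / l, hdiv s⟩ ⟨(s : ℕ) % l, hmod s⟩
      left_inv := by
        intro w
        funext s
        have hw : ∀ a : Fin (m * l), a = s → w a = w s := by rintro a rfl; rfl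
        exact hw _ (Fin.ext (by
          show ((s:ℕ) / l) * l + (s:ℕ) % l = (s:ℕ)
          rw [mul_comm]; exact Nat.div_add_mod _ _))
      right_inv := by
        intro F
        funext i t
        have h1 : ((i:ℕ) * l + (t:ℕ)) / l = (i:ℕ) := by
          rw [add_comm, Nat.add_mul_div_right _ _ hlpos, Nat.div_eq_of_lt t.2, zero_add]
        have h2 : ((i:ℕ) * l + (t:ℕ)) % l = (t:ℕ) := by
          rw [add_comm, Nat.add_mul_mod_self_right, Nat.mod_eq_of_lt t.2]
        have hF : ∀ (a : Fin m) (b : Fin l), a = i → b = t → F a b = F i t := by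
          rintro a b rfl rfl; rfl
        exact hF _ _ (Fin.ext (by simpa using h1)) (Fin.ext (by simpa using h2)) } with he
  -- reference product measure
  set q : Ω → ℝ := fun w => ∏ i, ρ i (sub i w) with hq
  have hq1 : ∑ w, q w = 1 := by
    rw [Fintype.sum_equiv e q (fun F => ∏ i, ρ i (F i)) (fun w => rfl)]
    rw [← Fintype.piFinset_univ, ← Finset.prod_univ_sum]
    exact Finset.prod_eq_one fun i _ => hρ1 i
  have hPprob : ∑ w, P w = 1 := blockFreq_sum S hn
  have hP0 : ∀ w, 0 ≤ P w := blockFreq_nonneg _ _ _ _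
  have hdom : ∀ w, P w ≠ 0 → q w ≠ 0 := by
    intro w hw
    rw [hq]
    refine Finset.prod_ne_zero_iff.2 fun i _ => ?_
    have := hPle i w
    have hPpos : 0 < P w := lt_of_le_of_ne (hP0 w) (Ne.symm hw)
    exact (lt_of_lt_of_le hPpos this).ne'
  -- Gibbs
  have hgibbs := gibbs hP0 hPprob (fun w => Finset.prod_nonneg fun i _ => hρ0 i (sub i w))
    hq1.le hdom
  -- CE = ∑ i, ent (ρ i)
  have hCE : ∑ w, P w * Real.log (q w)⁻¹ = ∑ i, ent (ρ i) := by
    have hsplit : ∀ w, P w * Real.log (q w)⁻¹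
        = ∑ i, P w * Real.log (ρ i (sub i w))⁻¹ := by
      intro w
      by_cases hw : P w = 0
      · simp [hw]
      · have hfac : ∀ i ∈ Finset.univ, ρ i (sub i w) ≠ 0 := by
          intro i _
          have hPpos : 0 < P w := lt_of_le_of_ne (hP0 w) (Ne.symm hw)
          exact (lt_of_lt_of_le hPpos (hPle i w)).ne'
        rw [hq]
        show P w * Real.log (∏ i, ρ i (sub i w))⁻¹ = _
        rw [Real.log_inv, Real.log_prod hfac, ← Finset.sum_neg_distrib, Finset.mul_sum]
        exact Finset.sum_congr rfl fun i _ => by rw [Real.log_inv]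
    rw [Finset.sum_congr rfl fun w _ => hsplit w, Finset.sum_comm]
    refine Finset.sum_congr rfl fun i _ => ?_
    have hfibsum := (Finset.sum_fiberwise_of_maps_to
      (fun (w : Ω) (_ : w ∈ Finset.univ) => Finset.mem_univ (sub i w))
      (fun w => P w * Real.log (ρ i (sub i w))⁻¹)).symm
    rw [hfibsum]
    rw [ent]
    refine Finset.sum_congr rfl fun v _ => ?_
    have : ∀ w ∈ Finset.univ.filter (fun w => sub i w = v),
        P w * Real.log (ρ i (sub i w))⁻¹ = P w * Real.log (ρ i v)⁻¹ := by
      intro w hw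
      rcases Finset.mem_filter.1 hw with ⟨-, hwv⟩
      rw [hwv]
    rw [Finset.sum_congr rfl this, ← Finset.sum_mul, hmarg i v, mul_log_inv_eq]
  -- average identity
  have havg : ∀ v, ∑ i, ρ i v = m * π v := by
    intro v
    have hglb : blockFreq k l S (n*m) v
        = (((Finset.range (n*m)).filter fun j => (fun t : Fin l => S (j * l + (t:ℕ))) = v).card : ℝ) / ((n:ℝ)*(m:ℝ)) := by
      rw [blockFreq_eq_fiber, Nat.cast_mul]
    have hcount : ((Finset.range (n*m)).filter fun j => (fun t : Fin l => S (j * l + (t:ℕ))) = v).card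
        = ∑ i : Fin m, ((Finset.range n).filter fun j => subf i j = v).card := by
      rw [Finset.card_filter]
      have hreindex : ∑ j' ∈ Finset.range (n*m), (if (fun t : Fin l => S (j' * l + (t:ℕ))) = v then 1 else 0)
          = ∑ x ∈ Finset.range n ×ˢ Finset.range m,
              (if (fun t : Fin l => S ((x.1 * m + x.2) * l + (t:ℕ))) = v then 1 else 0) := by
        refine Finset.sum_nbij' (fun j' => (j' / m, j' % m)) (fun x => x.1 * m + x.2) ?_ ?_ ?_ ?_ ?_
        · intro j' hj'
          rw [Finset.mem_range] at hj'
          exact Finset.mem_product.2 ⟨Finset.mem_range.2 ((Nat.div_lt_iff_lt_mul hmpos).2 hj'),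
            Finset.mem_range.2 (Nat.mod_lt _ hmpos)⟩
        · intro x hx
          rcases Finset.mem_product.1 hx with ⟨h1, h2⟩
          rw [Finset.mem_range] at h1 h2 ⊢
          calc x.1 * m + x.2 < x.1 * m + m := by omega
            _ = (x.1 + 1) * m := by ring
            _ ≤ n * m := Nat.mul_le_mul_right m h1
        · intro j' _
          show j' / m * m + j' % m = j'
          rw [mul_comm]; exact Nat.div_add_mod _ _
        · intro x hx
          rcases Finset.mem_product.1 hx with ⟨-, h2⟩
          rw [Finset.mem_range] at h2
          ext <;> simp [Nat.add_mul_div_right, Nat.add_mul_mod_self_right]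
          · rw [add_comm, Nat.add_mul_div_right _ _ hmpos, Nat.div_eq_of_lt h2, zero_add]
          · exact Nat.mod_eq_of_lt h2
        · intro j' _
          have hjj : j' / m * m + j' % m = j' := by rw [mul_comm]; exact Nat.div_add_mod _ _
          rw [hjj]
      rw [hreindex, Finset.sum_product]
      rw [Finset.sum_comm]
      rw [← Fin.sum_univ_eq_sum_range (f := fun i => ∑ j ∈ Finset.range n,
        (if (fun t : Fin l => S ((j * m + i) * l + (t:ℕ))) = v then 1 else 0))]
      refine Finset.sum_congr rfl fun i _ => ?_
      rw [Finset.card_filter]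
      refine Finset.sum_congr rfl fun j _ => ?_
      congr 2
      · funext t
        show S ((j * m + (i:ℕ)) * l + (t:ℕ)) = S (j * (m * l) + (i:ℕ) * l + (t:ℕ))
        congr 1; ring
    have hρsum : ∑ i, ρ i v
        = ((∑ i : Fin m, ((Finset.range n).filter fun j => subf i j = v).card : ℕ) : ℝ) / n := by
      rw [hρ, ← Finset.sum_div]; norm_cast
    rw [hρsum, ← hcount, hπdef, hglb]
    push_cast
    field_simp
  -- conclude on ent level
  have hππ0 : ∀ v, 0 ≤ π v := blockFreq_nonneg _ _ _ _
  have hπ1 : ∑ v, π v = 1 := blockFreq_sum S (Nat.mul_pos hn hmpos)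
  have hstep2 : ∀ i : Fin m, ent (ρ i) ≤ ∑ v, ρ i v * Real.log (π v)⁻¹ := by
    intro i
    refine gibbs (hρ0 i) (hρ1 i) hππ0 hπ1.le ?_
    intro v hv
    intro hπv
    apply hv
    have := havg v
    rw [hπv, mul_zero] at this
    exact (Finset.sum_eq_zero_iff_of_nonneg (fun i' _ => hρ0 i' v)).1 this i (Finset.mem_univ i)
  have hstep3 : ∑ i, ent (ρ i) ≤ m * ent π := by
    calc ∑ i, ent (ρ i) ≤ ∑ i, ∑ v, ρ i v * Real.log (π v)⁻¹ :=
          Finset.sum_le_sum fun i _ => hstep2 i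
      _ = ∑ v, (∑ i, ρ i v) * Real.log (π v)⁻¹ := by
          rw [Finset.sum_comm]
          exact Finset.sum_congr rfl fun v _ => (Finset.sum_mul _ _ _).symm
      _ = ∑ v, m * (π v * Real.log (π v)⁻¹) := by
          refine Finset.sum_congr rfl fun v _ => ?_
          rw [havg v]; ring
      _ = m * ent π := by
          rw [← Finset.mul_sum, ent]
          congr 1
          exact Finset.sum_congr rfl fun v _ => mul_log_inv_eq (π v)
  have hfinal : ent P ≤ m * ent π := le_trans (le_trans hgibbs (le_of_eq hCE)) hstep3
  rw [shannonEntropy_eq, shannonEntropy_eq]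
  have h2 : (0:ℝ) < Real.log 2 := Real.log_pos (by norm_num)
  rw [← mul_div_assoc]
  exact div_le_div_of_nonneg_right hfinal h2.le

lemma eps_le_helper {a b : ℝ} (h : ∀ ε : ℝ, 0 < ε → a ≤ b + ε) : a ≤ b := by
  by_contra hc
  push_neg at hc
  have := h ((a - b)/2) (by linarith)
  linarith

lemma negMulLog_le_two_sqrt {x : ℝ} (hx : 0 ≤ x) : Real.negMulLog x ≤ 2 * Real.sqrt x := by
  rcases eq_or_lt_of_le hx with rfl | hx'
  · simp
  have hs : 0 < Real.sqrt x := Real.sqrt_pos.2 hx'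
  have h1 : Real.log (Real.sqrt x)⁻¹ ≤ (Real.sqrt x)⁻¹ - 1 :=
    Real.log_le_sub_one_of_pos (by positivity)
  have h2 : Real.negMulLog x = 2 * (x * Real.log (Real.sqrt x)⁻¹) := by
    rw [Real.negMulLog, Real.log_inv, Real.log_sqrt hx]
    ring
  have h3 : x * Real.log (Real.sqrt x)⁻¹ ≤ x * (Real.sqrt x)⁻¹ :=
    mul_le_mul_of_nonneg_left (h1.trans (by linarith [hs])) hx
  have h4 : x * (Real.sqrt x)⁻¹ = Real.sqrt x := by
    rw [← div_eq_mul_inv, Real.div_sqrt]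
  linarith

-- entropy change when extending the sample
lemma ent_block_extend (k l : ℕ) (S : ℕ → Fin k) {n n' : ℕ} (hn : 1 ≤ n) (hlt : n < n') :
    ent (blockFreq k l S n') ≤ ent (blockFreq k l S n)
      + (((n' - n : ℕ):ℝ)/(n':ℝ)) * Real.log ((k:ℝ)^l)
      + Real.negMulLog ((n:ℝ)/(n':ℝ)) + Real.negMulLog (((n' - n : ℕ):ℝ)/(n':ℝ)) := by
  have hnR : (0:ℝ) < n := by exact_mod_cast hn
  have hn'R : (0:ℝ) < n' := by exact_mod_cast (hn.trans hlt.le)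
  have hd : 0 < n' - n := by omega
  have hdR : (0:ℝ) < ((n' - n : ℕ):ℝ) := by exact_mod_cast hd
  set ρ : (Fin l → Fin k) → ℝ := fun w =>
    (((Finset.Ico n n').filter fun j => (fun t : Fin l => S (j * l + (t:ℕ))) = w).card : ℝ)
      / ((n' - n : ℕ):ℝ) with hρ
  have hρ0 : ∀ w, 0 ≤ ρ w := fun w => by rw [hρ]; positivity
  have hρ1 : ∑ w, ρ w = 1 := by
    rw [hρ, ← Finset.sum_div, div_eq_one_iff_eq hdR.ne']
    rw [show ((n' - n : ℕ):ℝ) = ((Finset.Ico n n').card : ℝ) from by rw [Nat.card_Ico]]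
    exact_mod_cast sum_card_fiber (Finset.Ico n n') _
  -- mixture identity
  have hmix : ∀ w, blockFreq k l S n' w
      = ((n:ℝ)/(n':ℝ)) * blockFreq k l S n w + (((n' - n : ℕ):ℝ)/(n':ℝ)) * ρ w := by
    intro w
    rw [blockFreq_eq_fiber, blockFreq_eq_fiber, hρ]
    have hsplit : (Finset.range n').filter (fun j => (fun t : Fin l => S (j * l + (t:ℕ))) = w)
        = ((Finset.range n).filter fun j => (fun t : Fin l => S (j * l + (t:ℕ))) = w)
          ∪ ((Finset.Ico n n').filter fun j => (fun t : Fin l => S (j * l + (t:ℕ))) = w) := by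
      rw [← Finset.filter_union]
      congr 1
      rw [Finset.range_eq_Ico, Finset.range_eq_Ico]
      exact (Finset.Ico_union_Ico_eq_Ico (Nat.zero_le n) hlt.le).symm
    rw [hsplit, Finset.card_union_of_disjoint]
    · push_cast
      field_simp
    · exact Finset.disjoint_filter_filter
        (Finset.disjoint_left.2 fun j hj1 hj2 => by
          rw [Finset.mem_range] at hj1
          rcases Finset.mem_Ico.1 hj2 with ⟨h1, -⟩
          omega)
  have hmixf : blockFreq k l S n'
      = fun w => ((n:ℝ)/(n':ℝ)) * blockFreq k l S n w + (((n' - n : ℕ):ℝ)/(n':ℝ)) * ρ w :=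
    funext hmix
  have hab : (n:ℝ)/(n':ℝ) + ((n' - n : ℕ):ℝ)/(n':ℝ) = 1 := by
    rw [← add_div, div_eq_one_iff_eq hn'R.ne']
    push_cast [Nat.cast_sub (hlt.le)]
    ring
  have hmain := ent_mix_le (a := (n:ℝ)/(n':ℝ)) (b := ((n' - n : ℕ):ℝ)/(n':ℝ))
    (blockFreq_sum S hn) hρ1 (by positivity) (by positivity)
    (blockFreq_nonneg k l S n) hρ0
  rw [← hmixf] at hmain
  have hρle : ent ρ ≤ Real.log ((k:ℝ)^l) := by
    have := ent_le_log_card hρ0 hρ1 (s := Finset.univ) (fun w _ => Finset.mem_univ w)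
    rwa [Finset.card_univ, show (((Fintype.card (Fin l → Fin k)) : ℕ) : ℝ) = (k:ℝ)^l from
      card_fun_fin k l] at this
  have hent0 : 0 ≤ ent (blockFreq k l S n) :=
    ent_nonneg (blockFreq_nonneg k l S n) (blockFreq_le_one k l S n)
  have hlam1 : (n:ℝ)/(n':ℝ) ≤ 1 := by
    rw [div_le_one hn'R]; exact_mod_cast hlt.le
  have h1 : ((n:ℝ)/(n':ℝ)) * ent (blockFreq k l S n) ≤ ent (blockFreq k l S n) := by
    nlinarith [hent0]
  have h2 : (((n' - n : ℕ):ℝ)/(n':ℝ)) * ent ρ ≤ (((n' - n : ℕ):ℝ)/(n':ℝ)) * Real.log ((k:ℝ)^l) :=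
    mul_le_mul_of_nonneg_left hρle (by positivity)
  linarith

-- liminf along multiples
lemma liminf_block_mul_le {k : ℕ} (hk : 2 ≤ k) (l m : ℕ) (hm : 1 ≤ m) (S : ℕ → Fin k) :
    Filter.liminf (fun n => shannonEntropy (blockFreq k l S (n * m))) Filter.atTop
      ≤ Filter.liminf (fun n => shannonEntropy (blockFreq k l S n)) Filter.atTop := by
  set h : ℕ → ℝ := fun n => shannonEntropy (blockFreq k l S n) with hh
  have hh0 : ∀ n, 0 ≤ h n := fun n => shannon_blockFreq_nonneg k l S n
  have hhL : ∀ n, h n ≤ l * Real.logb 2 k := fun n => shannon_blockFreq_le hk l S n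
  have hmR : (0:ℝ) < m := by exact_mod_cast hm
  have hlog2 : (0:ℝ) < Real.log 2 := Real.log_pos (by norm_num)
  have hbdd : Filter.IsBoundedUnder (· ≤ ·) Filter.atTop h :=
    Filter.isBoundedUnder_of ⟨l * Real.logb 2 k, fun n => hhL n⟩
  have hcob : Filter.IsCoboundedUnder (· ≥ ·) Filter.atTop h :=
    hbdd.isCoboundedUnder_ge
  refine eps_le_helper fun ε hε => ?_
  -- error bound tends to zero
  set E : ℕ → ℝ := fun n =>
    ((m:ℝ)/n * Real.log ((k:ℝ)^l) + (m:ℝ)/n + 2 * Real.sqrt ((m:ℝ)/n)) / Real.log 2 with hE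
  have hEtend : Filter.Tendsto E Filter.atTop (nhds 0) := by
    have hmn : Filter.Tendsto (fun n : ℕ => (m:ℝ)/n) Filter.atTop (nhds 0) :=
      tendsto_const_div_atTop_nhds_zero_nat (m:ℝ)
    have hsq : Filter.Tendsto (fun n : ℕ => Real.sqrt ((m:ℝ)/n)) Filter.atTop (nhds 0) := by
      have := (Real.continuous_sqrt.tendsto 0).comp hmn
      rwa [Real.sqrt_zero] at this
    have hsum : Filter.Tendsto (fun n : ℕ =>
        (m:ℝ)/n * Real.log ((k:ℝ)^l) + (m:ℝ)/n + 2 * Real.sqrt ((m:ℝ)/n))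
        Filter.atTop (nhds ((0:ℝ) * Real.log ((k:ℝ)^l) + 0 + 2*0)) :=
      ((hmn.mul_const (Real.log ((k:ℝ)^l))).add hmn).add (hsq.const_mul 2)
    rw [show (0:ℝ) * Real.log ((k:ℝ)^l) + 0 + 2*0 = 0 from by ring] at hsum
    have := hsum.div_const (Real.log 2)
    rwa [zero_div] at this
  -- Claim A : extension bound
  have hclaim : ∀ n : ℕ, 1 ≤ n → h (m * (n / m + 1)) ≤ h n + E n := by
    intro n hn
    set n' := m * (n / m + 1) with hn'
    have hmod := Nat.mod_lt n (show 0 < m from hm)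
    have hdivmod := Nat.div_add_mod n m
    have hlt : n < n' := by
      calc n = m * (n / m) + n % m := hdivmod.symm
        _ < m * (n / m) + m := by omega
        _ = m * (n / m + 1) := by ring
    have hle : n' ≤ n + m := by
      have : m * (n / m) ≤ n := Nat.mul_div_le n m
      calc n' = m * (n / m) + m := by rw [hn']; ring
        _ ≤ n + m := by omega
    have hnR : (0:ℝ) < n := by exact_mod_cast hn
    have hn'R : (0:ℝ) < n' := by exact_mod_cast hn.trans hlt.le
    have hcast : ((n' - n : ℕ):ℝ) ≤ (m:ℝ) := by
      have : n' - n ≤ m := by omega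
      exact_mod_cast this
    have hd0 : (0:ℝ) ≤ ((n' - n : ℕ):ℝ) := by positivity
    have hμmn' : ((n' - n : ℕ):ℝ)/(n':ℝ) ≤ (m:ℝ)/(n:ℝ) := by
      apply div_le_div₀ hmR.le hcast hnR
      exact_mod_cast hlt.le
    have hμ0 : 0 ≤ ((n' - n : ℕ):ℝ)/(n':ℝ) := by positivity
    -- bound each correction term
    have hterm1 : (((n' - n : ℕ):ℝ)/(n':ℝ)) * Real.log ((k:ℝ)^l)
        ≤ ((m:ℝ)/n) * Real.log ((k:ℝ)^l) := by
      apply mul_le_mul_of_nonneg_right hμmn'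
      apply Real.log_nonneg
      have : (1:ℝ) ≤ (k:ℝ) := by exact_mod_cast hk.trans' (by norm_num)
      exact one_le_pow₀ this
    have hlampos : (0:ℝ) < (n:ℝ)/(n':ℝ) := by positivity
    have hlam1 : (n:ℝ)/(n':ℝ) ≤ 1 := by
      rw [div_le_one hn'R]; exact_mod_cast hlt.le
    have hterm2 : Real.negMulLog ((n:ℝ)/(n':ℝ)) ≤ (m:ℝ)/n := by
      have hinv : ((n:ℝ)/(n':ℝ))⁻¹ = (n':ℝ)/(n:ℝ) := by rw [inv_div]
      have hlog : Real.log ((n:ℝ)/(n':ℝ))⁻¹ ≤ (n':ℝ)/(n:ℝ) - 1 := by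
        rw [hinv] at *
        exact (Real.log_le_sub_one_of_pos (by positivity)).trans_eq rfl
      have hlognn : 0 ≤ Real.log ((n:ℝ)/(n':ℝ))⁻¹ := by
        rw [Real.log_inv]
        have := Real.log_nonpos hlampos.le hlam1
        linarith
      have : Real.negMulLog ((n:ℝ)/(n':ℝ)) = ((n:ℝ)/(n':ℝ)) * Real.log ((n:ℝ)/(n':ℝ))⁻¹ := by
        rw [Real.negMulLog, Real.log_inv]; ring
      rw [this]
      have hb1 : ((n:ℝ)/(n':ℝ)) * Real.log ((n:ℝ)/(n':ℝ))⁻¹ ≤ Real.log ((n:ℝ)/(n':ℝ))⁻¹ := by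
        nlinarith
      have hb2 : (n':ℝ)/(n:ℝ) - 1 ≤ (m:ℝ)/n := by
        rw [div_sub_one hnR.ne', div_le_div_iff₀ hnR hnR]
        have : (n':ℝ) - n ≤ (m:ℝ) := by
          have : (n':ℝ) ≤ (n:ℝ) + m := by exact_mod_cast hle
          linarith
        nlinarith
      linarith
    have hterm3 : Real.negMulLog (((n' - n : ℕ):ℝ)/(n':ℝ)) ≤ 2 * Real.sqrt ((m:ℝ)/n) := by
      refine (negMulLog_le_two_sqrt hμ0).trans ?_
      have := Real.sqrt_le_sqrt hμmn'
      linarith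
    have hext := ent_block_extend k l S hn hlt
    have hcomb : ent (blockFreq k l S n') ≤ ent (blockFreq k l S n)
        + ((m:ℝ)/n * Real.log ((k:ℝ)^l) + (m:ℝ)/n + 2 * Real.sqrt ((m:ℝ)/n)) := by
      linarith
    show shannonEntropy (blockFreq k l S n') ≤ shannonEntropy (blockFreq k l S n) + E n
    rw [shannonEntropy_eq, shannonEntropy_eq, hE]
    calc ent (blockFreq k l S n') / Real.log 2
        ≤ (ent (blockFreq k l S n)
          + ((m:ℝ)/n * Real.log ((k:ℝ)^l) + (m:ℝ)/n + 2 * Real.sqrt ((m:ℝ)/n))) / Real.log 2 :=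
          div_le_div_of_nonneg_right hcomb hlog2.le
      _ = ent (blockFreq k l S n) / Real.log 2
          + ((m:ℝ)/n * Real.log ((k:ℝ)^l) + (m:ℝ)/n + 2 * Real.sqrt ((m:ℝ)/n)) / Real.log 2 := by
          ring
  -- eventually the error is small
  have hev : ∀ᶠ n in Filter.atTop, E n < ε/2 := hEtend.eventually_lt_const (by linarith)
  have hfreq : ∃ᶠ n in Filter.atTop, h n < Filter.liminf h Filter.atTop + ε/2 :=
    Filter.frequently_lt_of_liminf_lt hcob (by linarith)
  have hcomb : ∃ᶠ n in Filter.atTop,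
      h (m * (n / m + 1)) ≤ Filter.liminf h Filter.atTop + ε := by
    refine (hfreq.and_eventually (hev.and (Filter.eventually_ge_atTop 1))).mono ?_
    rintro n ⟨h1, h2, h3⟩
    have := hclaim n h3
    linarith
  have hfreq2 : ∃ᶠ j in Filter.atTop, h (j * m) ≤ Filter.liminf h Filter.atTop + ε := by
    rw [Filter.frequently_atTop] at hcomb ⊢
    intro N
    obtain ⟨n, hnge, hval⟩ := hcomb (m * N)
    refine ⟨n / m + 1, ?_, ?_⟩
    · have : N ≤ n / m := (Nat.le_div_iff_mul_le hm).2 (by rw [mul_comm] at hnge; omega)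
      omega
    · rw [mul_comm]; exact hval
  have hbdd2 : Filter.IsBoundedUnder (· ≥ ·) Filter.atTop (fun j => h (j * m)) :=
    Filter.isBoundedUnder_of ⟨0, fun j => hh0 _⟩
  exact Filter.liminf_le_of_frequently_le hfreq2 hbdd2

-- F4
lemma liminf_le_liminf_add_limsup {u v g : ℕ → ℝ} {L M : ℝ}
    (hu0 : ∀ n, 0 ≤ u n) (hv0 : ∀ n, 0 ≤ v n) (hvL : ∀ n, v n ≤ L)
    (hg0 : ∀ n, 0 ≤ g n) (hgM : ∀ n, g n ≤ M)
    (h : ∀ n, u n ≤ v n + g n) :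
    Filter.liminf u Filter.atTop ≤ Filter.liminf v Filter.atTop + Filter.limsup g Filter.atTop := by
  have hgv_bdd : Filter.IsBoundedUnder (· ≤ ·) Filter.atTop (fun n => g n + v n) :=
    Filter.isBoundedUnder_of ⟨M + L, fun n => by have := hgM n; have := hvL n; linarith⟩
  have h1 : Filter.liminf u Filter.atTop ≤ Filter.liminf (fun n => g n + v n) Filter.atTop :=
    Filter.liminf_le_liminf (Filter.Eventually.of_forall fun n => by linarith [h n])
      (Filter.isBoundedUnder_of ⟨0, fun n => hu0 n⟩)
      hgv_bdd.isCoboundedUnder_ge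
  have h2 : Filter.liminf (g + v) Filter.atTop
      ≤ Filter.limsup g Filter.atTop + Filter.liminf v Filter.atTop :=
    liminf_add_le
      (Filter.isBoundedUnder_of ⟨0, fun n => hg0 n⟩)
      (Filter.isBoundedUnder_of ⟨M, fun n => hgM n⟩)
      (Filter.isBoundedUnder_of ⟨0, fun n => hv0 n⟩)
      ((Filter.isBoundedUnder_of ⟨L, fun n => hvL n⟩ :
        Filter.IsBoundedUnder (· ≤ ·) Filter.atTop v).isCoboundedUnder_ge)
  have heq : (fun n => g n + v n) = g + v := rfl
  rw [heq] at h1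
  linarith

-- main assembly
lemma key0 {k : ℕ} (hk : 2 ≤ k) (U V : ℕ → Fin k) (G : ℕ → ℕ → ℝ)
    (hG0 : ∀ l n : ℕ, 0 ≤ G l n)
    (hGM : ∀ l n : ℕ, G l n ≤ l * Real.logb 2 k)
    (hUV : ∀ l n : ℕ, 1 ≤ l →
      shannonEntropy (blockFreq k l U n) ≤ shannonEntropy (blockFreq k l V n) + G l n) :
    dimFS k U ≤ dimFS k V +
      Filter.limsup (fun l : ℕ => (1 / ((l:ℝ) * Real.logb 2 k)) *
        Filter.limsup (fun n => G l n) Filter.atTop) Filter.atTop := by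
  have hlogk : (1:ℝ) ≤ Real.logb 2 k := by
    rw [show (1:ℝ) = Real.logb 2 2 from (Real.logb_self_eq_one (by norm_num)).symm]
    exact Real.logb_le_logb_of_le (by norm_num) (by norm_num) (by exact_mod_cast hk)
  have hlogpos : (0:ℝ) < Real.logb 2 k := by linarith
  set c : ℕ → ℝ := fun l => 1 / ((l:ℝ) * Real.logb 2 k) with hc
  set d : ℕ → ℝ := fun l => c l * Filter.limsup (fun n => G l n) Filter.atTop with hdd
  set D := Filter.limsup d Filter.atTop with hD
  set bU : ℕ → ℝ := fun l => Filter.liminf (fun n => shannonEntropy (blockFreq k l U n)) Filter.atTop with hbU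
  set bV : ℕ → ℝ := fun l => Filter.liminf (fun n => shannonEntropy (blockFreq k l V n)) Filter.atTop with hbV
  -- basic bounds
  have hbU0 : ∀ l : ℕ, 0 ≤ bU l := fun l =>
    Filter.le_liminf_of_le
      ((Filter.isBoundedUnder_of ⟨(l:ℝ) * Real.logb 2 k, fun n => shannon_blockFreq_le hk l U n⟩ :
        Filter.IsBoundedUnder (· ≤ ·) Filter.atTop _).isCoboundedUnder_ge)
      (Filter.Eventually.of_forall fun n => shannon_blockFreq_nonneg k l U n)
  have hbV0 : ∀ l : ℕ, 0 ≤ bV l := fun l =>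
    Filter.le_liminf_of_le
      ((Filter.isBoundedUnder_of ⟨(l:ℝ) * Real.logb 2 k, fun n => shannon_blockFreq_le hk l V n⟩ :
        Filter.IsBoundedUnder (· ≤ ·) Filter.atTop _).isCoboundedUnder_ge)
      (Filter.Eventually.of_forall fun n => shannon_blockFreq_nonneg k l V n)
  have hc0 : ∀ l : ℕ, 0 ≤ c l := fun l => by
    rw [hc]; positivity
  have hcpos : ∀ l : ℕ, 1 ≤ l → 0 < c l := fun l hl => by
    rw [hc]
    have : (0:ℝ) < (l:ℝ) := by exact_mod_cast hl
    positivity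
  have hGlimsup0 : ∀ l : ℕ, 0 ≤ Filter.limsup (fun n => G l n) Filter.atTop := fun l =>
    Filter.le_limsup_of_frequently_le
      (Filter.Frequently.of_forall fun n => hG0 l n)
      (Filter.isBoundedUnder_of ⟨(l:ℝ) * Real.logb 2 k, fun n => hGM l n⟩)
  have hGlimsupM : ∀ l : ℕ, Filter.limsup (fun n => G l n) Filter.atTop ≤ (l:ℝ) * Real.logb 2 k :=
    fun l => Filter.limsup_le_of_le
      ((Filter.isBoundedUnder_of ⟨0, fun n => hG0 l n⟩ :
        Filter.IsBoundedUnder (· ≥ ·) Filter.atTop _).isCoboundedUnder_le)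
      (Filter.Eventually.of_forall fun n => hGM l n)
  have hd0 : ∀ l : ℕ, 0 ≤ d l := fun l => mul_nonneg (hc0 l) (hGlimsup0 l)
  have hd1 : ∀ l : ℕ, d l ≤ 1 := by
    intro l
    rcases Nat.eq_zero_or_pos l with rfl | hl
    · rw [hdd, hc]
      simp
    · have hlR : (0:ℝ) < (l:ℝ) := by exact_mod_cast hl
      rw [hdd, hc]
      calc 1 / ((l:ℝ) * Real.logb 2 k) * Filter.limsup (fun n => G l n) Filter.atTop
          ≤ 1 / ((l:ℝ) * Real.logb 2 k) * ((l:ℝ) * Real.logb 2 k) := by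
            apply mul_le_mul_of_nonneg_left (hGlimsupM l)
            positivity
        _ = 1 := by field_simp
  -- BddBelow for the two infima
  have hBddU : BddBelow (Set.range fun l : ℕ+ => c l * bU l) := by
    refine ⟨0, ?_⟩
    rintro x ⟨l, rfl⟩
    exact mul_nonneg (hc0 l) (hbU0 l)
  have hBddV : BddBelow (Set.range fun l : ℕ+ => c l * bV l) := by
    refine ⟨0, ?_⟩
    rintro x ⟨l, rfl⟩
    exact mul_nonneg (hc0 l) (hbV0 l)
  have hdimU : dimFS k U = ⨅ l : ℕ+, c l * bU l := rfl
  have hdimV : dimFS k V = ⨅ l : ℕ+, c l * bV l := rfl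
  refine eps_le_helper fun ε hε => ?_
  -- near-optimal l0 for V
  have hV_lt : (⨅ l : ℕ+, c l * bV l) < (⨅ l : ℕ+, c l * bV l) + ε/2 := by linarith
  obtain ⟨l0, hl0⟩ := exists_lt_of_ciInf_lt hV_lt
  -- eventual bound on d
  have hdbdd : Filter.IsBoundedUnder (· ≤ ·) Filter.atTop d :=
    Filter.isBoundedUnder_of ⟨1, fun l => hd1 l⟩
  have hDev : ∀ᶠ l in Filter.atTop, d l < D + ε/2 :=
    Filter.eventually_lt_of_limsup_lt (by linarith) hdbdd
  obtain ⟨N, hN⟩ := Filter.eventually_atTop.1 hDev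
  -- the big index
  set M : ℕ+ := ⟨N + 1, Nat.succ_pos N⟩ with hM
  set l1 : ℕ+ := M * l0 with hl1
  have hl1N : N ≤ (l1:ℕ) := by
    have h1 : (M:ℕ) ≤ (M:ℕ) * (l0:ℕ) := Nat.le_mul_of_pos_right _ l0.2
    have h2 : (l1:ℕ) = (M:ℕ) * (l0:ℕ) := rfl
    have h3 : (M:ℕ) = N + 1 := rfl
    omega
  have hl1ge : 1 ≤ (l1:ℕ) := l1.2
  -- step 1 : dimFS U ≤ c l1 * bU l1
  have hstep1 : dimFS k U ≤ c l1 * bU l1 := by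
    rw [hdimU]
    exact ciInf_le hBddU l1
  -- step 2 : bU l1 ≤ bV l1 + limsup G l1
  have hstep2 : bU (l1:ℕ) ≤ bV (l1:ℕ) + Filter.limsup (fun n => G (l1:ℕ) n) Filter.atTop := by
    rw [hbU, hbV]
    exact liminf_le_liminf_add_limsup (L := (l1:ℝ) * Real.logb 2 k) (M := (l1:ℝ) * Real.logb 2 k)
      (fun n => shannon_blockFreq_nonneg k l1 U n)
      (fun n => shannon_blockFreq_nonneg k l1 V n)
      (fun n => shannon_blockFreq_le hk l1 V n)
      (fun n => hG0 l1 n) (fun n => hGM l1 n)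
      (fun n => hUV l1 n hl1ge)
  -- step 3 : bV l1 ≤ M * bV l0
  have hstep3 : bV (l1:ℕ) ≤ (M:ℝ) * bV (l0:ℕ) := by
    have hcoe : (l1:ℕ) = (M:ℕ) * (l0:ℕ) := rfl
    have hpt : ∀ n, shannonEntropy (blockFreq k (l1:ℕ) V n)
        ≤ (M:ℕ) * shannonEntropy (blockFreq k (l0:ℕ) V (n * (M:ℕ))) := by
      intro n
      rw [hcoe]
      exact shannon_block_mul_le hk (l0:ℕ) (M:ℕ) l0.2 M.2 V n
    have hbd2 : Filter.IsBoundedUnder (· ≤ ·) Filter.atTop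
        (fun n => ((M:ℕ):ℝ) * shannonEntropy (blockFreq k (l0:ℕ) V (n * (M:ℕ)))) :=
      Filter.isBoundedUnder_of ⟨((M:ℕ):ℝ) * ((l0:ℝ) * Real.logb 2 k), fun n =>
        mul_le_mul_of_nonneg_left (shannon_blockFreq_le hk l0 V _) (by positivity)⟩
    have h1 : bV (l1:ℕ) ≤ Filter.liminf
        (fun n => ((M:ℕ):ℝ) * shannonEntropy (blockFreq k (l0:ℕ) V (n * (M:ℕ)))) Filter.atTop := by
      rw [hbV]
      exact Filter.liminf_le_liminf (Filter.Eventually.of_forall fun n => by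
          have := hpt n; exact_mod_cast this)
        (Filter.isBoundedUnder_of ⟨0, fun n => shannon_blockFreq_nonneg k l1 V n⟩)
        hbd2.isCoboundedUnder_ge
    have hMpos : (0:ℝ) < ((M:ℕ):ℝ) := by exact_mod_cast M.2
    have h2 : Filter.liminf
        (fun n => ((M:ℕ):ℝ) * shannonEntropy (blockFreq k (l0:ℕ) V (n * (M:ℕ)))) Filter.atTop
        = ((M:ℕ):ℝ) * Filter.liminf
            (fun n => shannonEntropy (blockFreq k (l0:ℕ) V (n * (M:ℕ)))) Filter.atTop := by
      refine ((OrderIso.mulLeft₀ ((M:ℕ):ℝ) hMpos).liminf_apply ?_ ?_ ?_ ?_).symm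
      · exact Filter.isBoundedUnder_of ⟨0, fun n => shannon_blockFreq_nonneg k l0 V _⟩
      · exact (Filter.isBoundedUnder_of ⟨(l0:ℝ) * Real.logb 2 k, fun n =>
          shannon_blockFreq_le hk l0 V _⟩ :
          Filter.IsBoundedUnder (· ≤ ·) Filter.atTop _).isCoboundedUnder_ge
      · exact Filter.isBoundedUnder_of ⟨0, fun n =>
          mul_nonneg hMpos.le (shannon_blockFreq_nonneg k l0 V _)⟩
      · exact (hbd2 : Filter.IsBoundedUnder (· ≤ ·) Filter.atTop _).isCoboundedUnder_ge
    have h3 : Filter.liminf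
        (fun n => shannonEntropy (blockFreq k (l0:ℕ) V (n * (M:ℕ)))) Filter.atTop ≤ bV (l0:ℕ) := by
      rw [hbV]
      exact liminf_block_mul_le hk (l0:ℕ) (M:ℕ) M.2 V
    calc bV (l1:ℕ) ≤ _ := h1
      _ = ((M:ℕ):ℝ) * _ := h2
      _ ≤ ((M:ℕ):ℝ) * bV (l0:ℕ) := mul_le_mul_of_nonneg_left h3 hMpos.le
  -- step 4 : c l1 * (M * bV l0) = c l0 * bV l0
  have hstep4 : c (l1:ℕ) * ((M:ℝ) * bV (l0:ℕ)) = c (l0:ℕ) * bV (l0:ℕ) := by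
    have hcoe : ((l1:ℕ):ℝ) = ((M:ℕ):ℝ) * ((l0:ℕ):ℝ) := by
      rw [show (l1:ℕ) = (M:ℕ) * (l0:ℕ) from rfl]
      push_cast
      ring
    have hMne : ((M:ℕ):ℝ) ≠ 0 := Nat.cast_ne_zero.2 M.ne_zero
    have hl0ne : ((l0:ℕ):ℝ) ≠ 0 := by exact_mod_cast l0.2.ne'
    simp only [hc]
    rw [hcoe]
    field_simp
  -- step 5 : d l1 small
  have hstep5 : d (l1:ℕ) < D + ε/2 := hN (l1:ℕ) hl1N
  -- combine
  have hfinal : dimFS k U ≤ c (l0:ℕ) * bV (l0:ℕ) + (D + ε/2) := by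
    have e1 : c (l1:ℕ) * bU (l1:ℕ)
        ≤ c (l1:ℕ) * bV (l1:ℕ) + d (l1:ℕ) := by
      have := mul_le_mul_of_nonneg_left hstep2 (hc0 (l1:ℕ))
      rw [mul_add] at this
      rw [hdd]
      exact this
    have e2 : c (l1:ℕ) * bV (l1:ℕ) ≤ c (l0:ℕ) * bV (l0:ℕ) := by
      calc c (l1:ℕ) * bV (l1:ℕ) ≤ c (l1:ℕ) * (((M:ℕ):ℝ) * bV (l0:ℕ)) :=
            mul_le_mul_of_nonneg_left (by exact_mod_cast hstep3) (hc0 (l1:ℕ))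
        _ = c (l0:ℕ) * bV (l0:ℕ) := by exact_mod_cast hstep4
    linarith [hstep1, hstep5]
  have : c (l0:ℕ) * bV (l0:ℕ) < dimFS k V + ε/2 := by
    rw [hdimV]; exact hl0
  calc dimFS k U ≤ c (l0:ℕ) * bV (l0:ℕ) + (D + ε/2) := hfinal
    _ ≤ dimFS k V + ε/2 + (D + ε/2) := by linarith
    _ = dimFS k V + D + ε := by ring


end AuxAll

theorem dimFS_deltaPlus_contractive (k : ℕ) (hk : 2 ≤ k) (S T : ℕ → Fin k) :
    |dimFS k S - dimFS k T| ≤ deltaPlus k S T := by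
  set G : ℕ → ℕ → ℝ := fun l n => logDisp (blockFreq k l S n) (blockFreq k l T n) with hG
  have hG0 : ∀ l n, 0 ≤ G l n := fun l n => logDisp_blockFreq_nonneg k l S T n
  have hGM : ∀ l n, G l n ≤ l * Real.logb 2 k := fun l n => logDisp_blockFreq_le hk l S T n
  have habs := fun l n => abs_shannon_blockFreq_sub_le hk l S T n
  have h1 := key0 hk S T G hG0 hGM (fun l n _ => by
    have h := habs l n
    linarith [(abs_le.1 h).2])
  have h2 := key0 hk T S G hG0 hGM (fun l n _ => by
    have h := habs l n
    linarith [(abs_le.1 h).1])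
  have hdp : deltaPlus k S T = Filter.limsup (fun l : ℕ =>
      (1 / ((l:ℝ) * Real.logb 2 k)) * Filter.limsup (fun n => G l n) Filter.atTop)
      Filter.atTop := rfl
  rw [abs_sub_le_iff, hdp]
  constructor
  · linarith
  · linarith
end

section
/- Let k ≥ 2 and m ≥ 1 be integers and α ≥ 0 a real number. Then the base-k expansions of the fractional parts of α and mα satisfy: for all positive integers l and n, δ(π_{α,n}^{(l)}, π_{mα,n}^{(l)}) ≤ log(m²(s+1)), where s is the sum of the base-k digits of m and δ is the logarithmic dispersion on probability measures on Σ^l. -/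
open scoped BigOperators
open Classical Filter

open scoped Classical

namespace DispAux

variable {k : ℕ}

lemma kpos (hk : 2 ≤ k) : (0:ℝ) < k := by
  have : (2:ℝ) ≤ k := by exact_mod_cast hk
  linarith

lemma summable_cdiv (hk : 2 ≤ k) (c : ℝ) : Summable (fun i : ℕ => c / (k : ℝ) ^ (i + 1)) := by
  have hk0 := kpos hk
  have h : (fun i : ℕ => c / (k : ℝ) ^ (i + 1)) = fun i : ℕ => (c / k) * ((1:ℝ)/k) ^ i := by
    funext i
    rw [div_pow, one_pow, pow_succ, div_mul_div_comm]
    ring_nf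
  rw [h]
  have hk2 : (2:ℝ) ≤ k := by exact_mod_cast hk
  exact (summable_geometric_of_lt_one (by positivity) (by
    rw [div_lt_one hk0]; linarith)).mul_left _

lemma tsum_cdiv (hk : 2 ≤ k) (c : ℝ) : ∑' i : ℕ, c / (k : ℝ) ^ (i + 1) = c / ((k:ℝ) - 1) := by
  have hk0 := kpos hk
  have hk2 : (2:ℝ) ≤ k := by exact_mod_cast hk
  have h : (fun i : ℕ => c / (k : ℝ) ^ (i + 1)) = fun i : ℕ => (c / k) * ((1:ℝ)/k) ^ i := by
    funext i
    rw [div_pow, one_pow, pow_succ, div_mul_div_comm]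
    ring_nf
  rw [h, tsum_mul_left, tsum_geometric_of_lt_one (by positivity) (by rw [div_lt_one hk0]; linarith)]
  field_simp

lemma summable_digits (hk : 2 ≤ k) (S : ℕ → Fin k) :
    Summable (fun i : ℕ => ((S i : ℕ) : ℝ) / (k : ℝ) ^ (i + 1)) := by
  have hk0 := kpos hk
  refine Summable.of_nonneg_of_le (fun i => by positivity) (fun i => ?_) (summable_cdiv hk k)
  gcongr
  exact le_of_lt (by exact_mod_cast (S i).isLt)

lemma expansion_mem (hk : 2 ≤ k) (S : ℕ → Fin k) :
    0 ≤ ∑' i : ℕ, ((S i : ℕ) : ℝ) / (k : ℝ) ^ (i + 1) ∧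
      ∑' i : ℕ, ((S i : ℕ) : ℝ) / (k : ℝ) ^ (i + 1) ≤ 1 := by
  have hk0 := kpos hk
  constructor
  · exact tsum_nonneg fun i => by positivity
  · have hle : ∀ i : ℕ, ((S i : ℕ) : ℝ) / (k : ℝ) ^ (i + 1) ≤ ((k:ℝ) - 1) / (k : ℝ) ^ (i + 1) := by
      intro i
      gcongr
      have : (S i : ℕ) < k := (S i).isLt
      have : ((S i : ℕ) : ℝ) + 1 ≤ k := by exact_mod_cast this
      linarith
    calc ∑' i : ℕ, ((S i : ℕ) : ℝ) / (k : ℝ) ^ (i + 1)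
        ≤ ∑' i : ℕ, ((k:ℝ) - 1) / (k : ℝ) ^ (i + 1) :=
          Summable.tsum_le_tsum hle (summable_digits hk S) (summable_cdiv hk _)
      _ = 1 := by
          rw [tsum_cdiv hk]
          have : (k:ℝ) - 1 ≠ 0 := by
            have : (2:ℝ) ≤ k := by exact_mod_cast hk
            linarith
          field_simp

def expPartial (S : ℕ → Fin k) (N : ℕ) : ℤ :=
  ∑ i ∈ Finset.range N, ((S i : ℕ) : ℤ) * (k : ℤ) ^ (N - 1 - i)

lemma expPartial_succ (S : ℕ → Fin k) (N : ℕ) :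
    expPartial S (N + 1) = k * expPartial S N + ((S N : ℕ) : ℤ) := by
  unfold expPartial
  rw [Finset.sum_range_succ]
  have h0 : N + 1 - 1 - N = 0 := by omega
  rw [h0, pow_zero, mul_one, Finset.mul_sum]
  congr 1
  apply Finset.sum_congr rfl
  intro i hi
  have hi' : i < N := Finset.mem_range.1 hi
  have : N + 1 - 1 - i = (N - 1 - i) + 1 := by omega
  rw [this, pow_succ]
  ring

lemma expPartial_add (S : ℕ → Fin k) (N L : ℕ) :
    expPartial S (N + L) = (k : ℤ) ^ L * expPartial S N +
      ∑ t ∈ Finset.range L, ((S (N + t) : ℕ) : ℤ) * (k : ℤ) ^ (L - 1 - t) := by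
  induction L with
  | zero => simp
  | succ L ih =>
      rw [show N + (L + 1) = (N + L) + 1 from rfl, expPartial_succ, ih,
        Finset.sum_range_succ]
      have h0 : L + 1 - 1 - L = 0 := by omega
      rw [h0, pow_zero, mul_one]
      have hsum : ∑ t ∈ Finset.range L, ((S (N + t) : ℕ) : ℤ) * (k : ℤ) ^ (L + 1 - 1 - t)
          = (k:ℤ) * ∑ t ∈ Finset.range L, ((S (N + t) : ℕ) : ℤ) * (k : ℤ) ^ (L - 1 - t) := by
        rw [Finset.mul_sum]
        apply Finset.sum_congr rfl
        intro t ht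
        have ht' : t < L := Finset.mem_range.1 ht
        have : L + 1 - 1 - t = (L - 1 - t) + 1 := by omega
        rw [this, pow_succ]
        ring
      rw [hsum, pow_succ]
      ring

lemma exp_tail_eq (hk : 2 ≤ k) (S : ℕ → Fin k) {x : ℝ}
    (hx : x = ∑' i : ℕ, ((S i : ℕ) : ℝ) / (k : ℝ) ^ (i + 1)) (N : ℕ) :
    x * (k : ℝ) ^ N - (expPartial S N : ℝ) = ∑' i : ℕ, ((S (N + i) : ℕ) : ℝ) / (k : ℝ) ^ (i + 1) := by
  have hk0 := kpos hk
  induction N with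
  | zero => simp [expPartial, hx]
  | succ N ih =>
      have hrec : x * (k : ℝ) ^ (N + 1) - (expPartial S (N + 1) : ℝ)
          = k * (x * (k : ℝ) ^ N - (expPartial S N : ℝ)) - ((S N : ℕ) : ℝ) := by
        rw [expPartial_succ]
        push_cast
        ring
      rw [hrec, ih]
      have hsum : Summable (fun i : ℕ => ((S (N + i) : ℕ) : ℝ) / (k : ℝ) ^ (i + 1)) :=
        summable_digits hk (fun i => S (N + i))
      rw [← tsum_mul_left]
      have h1 : (fun i : ℕ => (k : ℝ) * (((S (N + i) : ℕ) : ℝ) / (k : ℝ) ^ (i + 1)))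
          = fun i : ℕ => ((S (N + i) : ℕ) : ℝ) / (k : ℝ) ^ i := by
        funext i
        rw [pow_succ]
        field_simp
      rw [h1]
      have hsum2 : Summable (fun i : ℕ => ((S (N + i) : ℕ) : ℝ) / (k : ℝ) ^ i) := by
        rw [← h1]
        exact hsum.mul_left _
      rw [Summable.tsum_eq_zero_add hsum2]
      have h2 : (fun i : ℕ => ((S (N + (i + 1)) : ℕ) : ℝ) / (k : ℝ) ^ (i + 1))
          = fun i : ℕ => ((S (N + 1 + i) : ℕ) : ℝ) / (k : ℝ) ^ (i + 1) := by
        funext i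
        rw [show N + (i + 1) = N + 1 + i from by omega]
      simp only [pow_zero, add_zero]
      rw [h2]
      ring

lemma exp_tail_mem (hk : 2 ≤ k) (S : ℕ → Fin k) {x : ℝ}
    (hx : x = ∑' i : ℕ, ((S i : ℕ) : ℝ) / (k : ℝ) ^ (i + 1)) (N : ℕ) :
    0 ≤ x * (k : ℝ) ^ N - (expPartial S N : ℝ) ∧ x * (k : ℝ) ^ N - (expPartial S N : ℝ) ≤ 1 := by
  rw [exp_tail_eq hk S hx N]
  exact expansion_mem hk (fun i => S (N + i))

lemma exp_tail_succ (S : ℕ → Fin k) (x : ℝ) (N : ℕ) :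
    x * (k : ℝ) ^ (N + 1) - (expPartial S (N + 1) : ℝ)
      = k * (x * (k : ℝ) ^ N - (expPartial S N : ℝ)) - ((S N : ℕ) : ℝ) := by
  rw [expPartial_succ]
  push_cast
  ring

lemma tail_prop0 (hk : 2 ≤ k) (S : ℕ → Fin k) {x : ℝ}
    (hx : x = ∑' i : ℕ, ((S i : ℕ) : ℝ) / (k : ℝ) ^ (i + 1)) {N : ℕ}
    (h : x * (k : ℝ) ^ N - (expPartial S N : ℝ) = 0) (j : ℕ) :
    x * (k : ℝ) ^ (N + j) - (expPartial S (N + j) : ℝ) = 0 := by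
  induction j with
  | zero => simpa using h
  | succ j ih =>
      rw [show N + (j + 1) = (N + j) + 1 from rfl, exp_tail_succ, ih]
      have hlow := (exp_tail_mem hk S hx ((N + j) + 1)).1
      rw [exp_tail_succ, ih] at hlow
      have hS : (0:ℝ) ≤ ((S (N + j) : ℕ) : ℝ) := by positivity
      have : ((S (N + j) : ℕ) : ℝ) = 0 := by linarith
      rw [this]
      ring

lemma tail_prop1 (hk : 2 ≤ k) (S : ℕ → Fin k) {x : ℝ}
    (hx : x = ∑' i : ℕ, ((S i : ℕ) : ℝ) / (k : ℝ) ^ (i + 1)) {N : ℕ}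
    (h : x * (k : ℝ) ^ N - (expPartial S N : ℝ) = 1) (j : ℕ) :
    x * (k : ℝ) ^ (N + j) - (expPartial S (N + j) : ℝ) = 1 := by
  induction j with
  | zero => simpa using h
  | succ j ih =>
      rw [show N + (j + 1) = (N + j) + 1 from rfl, exp_tail_succ, ih, mul_one]
      have hup := (exp_tail_mem hk S hx ((N + j) + 1)).2
      rw [exp_tail_succ, ih, mul_one] at hup
      have hS : ((S (N + j) : ℕ) : ℝ) ≤ (k:ℝ) - 1 := by
        have : (S (N + j) : ℕ) < k := (S (N + j)).isLt
        have : ((S (N + j) : ℕ) : ℝ) + 1 ≤ k := by exact_mod_cast this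
        linarith
      linarith

variable {l : ℕ}

def numB (w : Fin l → Fin k) : ℕ := finFunctionFinEquiv (w ∘ Fin.rev)

lemma numB_lt (w : Fin l → Fin k) : numB w < k ^ l := (finFunctionFinEquiv (w ∘ Fin.rev)).isLt

lemma numB_inj : Function.Injective (numB (k := k) (l := l)) := by
  intro w₁ w₂ h
  have h1 : w₁ ∘ Fin.rev = w₂ ∘ Fin.rev :=
    finFunctionFinEquiv.injective (Fin.val_injective h)
  funext t
  have := congrFun h1 (Fin.rev t)
  simpa [Fin.rev_rev] using this

lemma numB_formula (w : Fin l → Fin k) :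
    numB w = ∑ t : Fin l, ((w t : ℕ)) * k ^ (l - 1 - (t : ℕ)) := by
  unfold numB
  rw [finFunctionFinEquiv_apply]
  apply Fintype.sum_bijective Fin.rev Fin.rev_bijective
  intro i
  simp only [Function.comp_apply]
  congr 1
  have h1 : ((Fin.rev i : Fin l) : ℕ) = l - 1 - (i : ℕ) := by
    rw [Fin.val_rev]
    omega
  have h2 : l - 1 - ((Fin.rev i : Fin l) : ℕ) = (i : ℕ) := by
    rw [Fin.val_rev]
    have := i.isLt
    omega
  rw [h2]

lemma numB_pre (a : ℕ) (ha : a < k ^ l) :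
    numB ((finFunctionFinEquiv.symm ⟨a, ha⟩ : Fin l → Fin k) ∘ Fin.rev) = a := by
  unfold numB
  have h : ((finFunctionFinEquiv.symm ⟨a, ha⟩ : Fin l → Fin k) ∘ Fin.rev) ∘ Fin.rev
      = (finFunctionFinEquiv.symm ⟨a, ha⟩ : Fin l → Fin k) := by
    funext t
    simp [Function.comp_apply, Fin.rev_rev]
  rw [h, Equiv.apply_symm_apply]

lemma int_eq_zero_of_dvd {n a : ℤ} (hn : 0 < n) (h : n ∣ a) (h1 : -n < a) (h2 : a < n) :
    a = 0 := by
  obtain ⟨c, rfl⟩ := h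
  have hc1 : c < 1 := by nlinarith
  have hc2 : -1 < c := by nlinarith
  have : c = 0 := by omega
  simp [this]

/-- The relation: `num y ≡ m · num x + d₀ + d'  (mod k^l)` for some `0 ≤ d' ≤ m`. -/
def RelD (k l m : ℕ) (d₀ : ℤ) (x y : Fin l → Fin k) : Prop :=
  ∃ d' : ℕ, d' ≤ m ∧ (k : ℤ) ^ l ∣ ((numB y : ℤ) - ((m : ℤ) * (numB x : ℤ) + d₀ + (d' : ℤ)))

lemma count_col (m : ℕ) (hkl : 0 < k ^ l) (d₀ : ℤ) (x : Fin l → Fin k) :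
    (Finset.univ.filter fun y : Fin l → Fin k => RelD k l m d₀ x y).card ≤ m + 1 := by
  classical
  have hklZ : (0:ℤ) < (k:ℤ) ^ l := by exact_mod_cast hkl
  refine le_trans (Finset.card_le_card_of_injOn (t := Finset.range (m + 1))
    (fun y : Fin l → Fin k => if h : RelD k l m d₀ x y then h.choose else 0) ?_ ?_) (by simp)
  · intro y hy
    have hy' : RelD k l m d₀ x y := (Finset.mem_filter.1 hy).2
    dsimp only
    rw [dif_pos hy']
    exact Finset.mem_range.2 (Nat.lt_succ_of_le hy'.choose_spec.1)
  · intro y₁ hy₁ y₂ hy₂ heq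
    have h₁ : RelD k l m d₀ x y₁ := by simpa using hy₁
    have h₂ : RelD k l m d₀ x y₂ := by simpa using hy₂
    dsimp only at heq
    rw [dif_pos h₁, dif_pos h₂] at heq
    obtain ⟨hd₁, hdvd₁⟩ := h₁.choose_spec
    obtain ⟨hd₂, hdvd₂⟩ := h₂.choose_spec
    rw [heq] at hdvd₁
    have hdvd : (k : ℤ) ^ l ∣ ((numB y₁ : ℤ) - (numB y₂ : ℤ)) := by
      have := dvd_sub hdvd₁ hdvd₂
      simpa using this
    have hb₁ := numB_lt y₁
    have hb₂ := numB_lt y₂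
    have hbz₁ : (numB y₁ : ℤ) < (k:ℤ)^l := by exact_mod_cast hb₁
    have hbz₂ : (numB y₂ : ℤ) < (k:ℤ)^l := by exact_mod_cast hb₂
    have h0 : (numB y₁ : ℤ) - (numB y₂ : ℤ) = 0 := by
      apply int_eq_zero_of_dvd hklZ hdvd
      · have : (0:ℤ) ≤ (numB y₁ : ℤ) := by positivity
        linarith
      · have : (0:ℤ) ≤ (numB y₂ : ℤ) := by positivity
        linarith
    have : numB y₁ = numB y₂ := by exact_mod_cast sub_eq_zero.1 h0
    exact numB_inj this

lemma count_row (m : ℕ) (hm : 1 ≤ m) (hkl : 0 < k ^ l) (d₀ : ℤ) (y : Fin l → Fin k) :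
    (Finset.univ.filter fun x : Fin l → Fin k => RelD k l m d₀ x y).card ≤ (m + 1) * m := by
  classical
  refine le_trans (Finset.card_le_card_of_injOn
    (t := (Finset.range (m + 1)) ×ˢ (Finset.range m))
    (fun x : Fin l → Fin k =>
      ((if h : RelD k l m d₀ x y then h.choose else 0), m * numB x / k ^ l)) ?_ ?_)
    (by simp [Finset.card_product])
  · intro x hx
    have hx' : RelD k l m d₀ x y := (Finset.mem_filter.1 hx).2
    dsimp only
    refine Finset.mem_product.2 ?_
    constructor
    · rw [dif_pos hx']
      exact Finset.mem_range.2 (Nat.lt_succ_of_le hx'.choose_spec.1)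
    · apply Finset.mem_range.2
      rw [Nat.div_lt_iff_lt_mul hkl]
      exact mul_lt_mul_of_pos_left (numB_lt x) (by omega)
  · intro x₁ hx₁ x₂ hx₂ heq
    have h₁ : RelD k l m d₀ x₁ y := by simpa using hx₁
    have h₂ : RelD k l m d₀ x₂ y := by simpa using hx₂
    dsimp only at heq
    rw [dif_pos h₁, dif_pos h₂] at heq
    have heq1 : h₁.choose = h₂.choose := (Prod.mk.injEq _ _ _ _ ▸ heq).1
    have heq2 : m * numB x₁ / k ^ l = m * numB x₂ / k ^ l := (Prod.mk.injEq _ _ _ _ ▸ heq).2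
    obtain ⟨hd₁, hdvd₁⟩ := h₁.choose_spec
    obtain ⟨hd₂, hdvd₂⟩ := h₂.choose_spec
    rw [heq1] at hdvd₁
    have hdvd : (k : ℤ) ∣ 0 := dvd_zero _
    have hdvd' : (k : ℤ) ^ l ∣ ((m : ℤ) * (numB x₂ : ℤ) - (m : ℤ) * (numB x₁ : ℤ)) := by
      have := dvd_sub hdvd₁ hdvd₂
      have h' : ((numB y : ℤ) - ((m : ℤ) * (numB x₁ : ℤ) + d₀ + (h₂.choose : ℤ)))
          - ((numB y : ℤ) - ((m : ℤ) * (numB x₂ : ℤ) + d₀ + (h₂.choose : ℤ)))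
          = (m : ℤ) * (numB x₂ : ℤ) - (m : ℤ) * (numB x₁ : ℤ) := by ring
      rwa [h'] at this
    have hmod : (m * numB x₁) % k ^ l = (m * numB x₂) % k ^ l := by
      have : (m * numB x₁ : ℕ) ≡ (m * numB x₂ : ℕ) [MOD k ^ l] := by
        rw [← Int.natCast_modEq_iff]
        rw [Int.modEq_iff_dvd]
        push_cast
        convert hdvd' using 2
      exact this
    have hqe : m * numB x₁ = m * numB x₂ := by
      rw [← Nat.div_add_mod (m * numB x₁) (k ^ l), ← Nat.div_add_mod (m * numB x₂) (k ^ l),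
        heq2, hmod]
    have : numB x₁ = numB x₂ := Nat.eq_of_mul_eq_mul_left hm hqe
    exact numB_inj this

/-- Fallback image used in empty columns of the witness matrix. -/
noncomputable def fb (m : ℕ) (d₀ : ℤ) (hkl : 0 < k ^ l) (x : Fin l → Fin k) : Fin l → Fin k :=
  (finFunctionFinEquiv.symm ⟨(((m : ℤ) * (numB x : ℤ) + d₀) % ((k ^ l : ℕ) : ℤ)).toNat, by
    have hklZ : (0:ℤ) < ((k ^ l : ℕ) : ℤ) := by exact_mod_cast hkl
    have h1 := Int.emod_nonneg ((m : ℤ) * (numB x : ℤ) + d₀) (ne_of_gt hklZ)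
    have h2 := Int.emod_lt_of_pos ((m : ℤ) * (numB x : ℤ) + d₀) hklZ
    omega⟩ : Fin l → Fin k) ∘ Fin.rev

lemma numB_fb (m : ℕ) (d₀ : ℤ) (hkl : 0 < k ^ l) (x : Fin l → Fin k) :
    numB (fb m d₀ hkl x) = (((m : ℤ) * (numB x : ℤ) + d₀) % ((k ^ l : ℕ) : ℤ)).toNat :=
  numB_pre _ _

lemma fb_rel (m : ℕ) (d₀ : ℤ) (hkl : 0 < k ^ l) (x : Fin l → Fin k) :
    RelD k l m d₀ x (fb m d₀ hkl x) := by
  refine ⟨0, Nat.zero_le m, ?_⟩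
  have hklZ : (0:ℤ) < ((k ^ l : ℕ) : ℤ) := by exact_mod_cast hkl
  have h1 := Int.emod_nonneg ((m : ℤ) * (numB x : ℤ) + d₀) (ne_of_gt hklZ)
  rw [numB_fb]
  rw [Int.toNat_of_nonneg h1]
  refine ⟨-(((m : ℤ) * (numB x : ℤ) + d₀) / ((k ^ l : ℕ) : ℤ)), ?_⟩
  rw [Int.emod_def]
  push_cast
  ring

/-- The `j`-th `l`-block of `S`. -/
def blockOf (l : ℕ) (S : ℕ → Fin k) (j : ℕ) : Fin l → Fin k := fun t => S (j * l + (t : ℕ))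

lemma blockFreq_eq (k l n : ℕ) (S : ℕ → Fin k) (w : Fin l → Fin k) :
    blockFreq k l S n w = (((Finset.range n).filter fun j => blockOf l S j = w).card : ℝ) / n := by
  unfold blockFreq
  congr 3
  apply Finset.filter_congr
  intro j _
  simp [blockOf, funext_iff]

lemma dispWitness_mono {Ω : Type*} [Fintype Ω] {m₁ m₂ : ℕ} {A : Matrix Ω Ω ℝ} {p q : Ω → ℝ}
    (h : m₁ ≤ m₂) (hw : DispWitness m₁ A p q) : DispWitness m₂ A p q :=
  ⟨hw.1, hw.2.1, hw.2.2.1, fun i => le_trans (hw.2.2.2.1 i) h, fun j => le_trans (hw.2.2.2.2 j) h⟩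

lemma witness_exists (m : ℕ) (hm : 1 ≤ m) (hkl : 0 < k ^ l) (n : ℕ) (hn : 0 < n)
    (S T : ℕ → Fin k) (d₀ : ℤ)
    (hrel : ∀ j : ℕ, RelD k l m d₀ (blockOf l S j) (blockOf l T j)) :
    ∃ A, DispWitness ((m + 1) * m) A (blockFreq k l S n) (blockFreq k l T n) := by
  classical
  set p := blockFreq k l S n with hp
  set q := blockFreq k l T n with hq
  set cX : (Fin l → Fin k) → ℕ :=
    fun x => ((Finset.range n).filter fun j => blockOf l S j = x).card with hcX
  set cY : (Fin l → Fin k) → ℕ :=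
    fun y => ((Finset.range n).filter fun j => blockOf l T j = y).card with hcY
  set cXY : (Fin l → Fin k) → (Fin l → Fin k) → ℕ :=
    fun x y => ((Finset.range n).filter
      fun j => blockOf l S j = x ∧ blockOf l T j = y).card with hcXY
  set F : (Fin l → Fin k) → (Fin l → Fin k) := fb m d₀ hkl with hF
  set A : Matrix (Fin l → Fin k) (Fin l → Fin k) ℝ :=
    fun y x => if cX x = 0 then (if y = F x then 1 else 0) else (cXY x y : ℝ) / (cX x) with hA
  have hnR : (0:ℝ) < n := by exact_mod_cast hn
  have hpx : ∀ x, p x = (cX x : ℝ) / n := fun x => blockFreq_eq k l n S x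
  have hqy : ∀ y, q y = (cY y : ℝ) / n := fun y => blockFreq_eq k l n T y
  -- fiberwise decomposition for columns
  have hfibX : ∀ x, ∑ y, cXY x y = cX x := by
    intro x
    show ∑ y, cXY x y = ((Finset.range n).filter fun j => blockOf l S j = x).card
    rw [Finset.card_eq_sum_card_fiberwise
      (f := blockOf l T) (t := Finset.univ) (fun j _ => Finset.mem_univ _)]
    apply Finset.sum_congr rfl
    intro y _
    show ((Finset.range n).filter fun j => blockOf l S j = x ∧ blockOf l T j = y).card = _
    rw [Finset.filter_filter]
  have hfibY : ∀ y, ∑ x, cXY x y = cY y := by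
    intro y
    show ∑ x, cXY x y = ((Finset.range n).filter fun j => blockOf l T j = y).card
    rw [Finset.card_eq_sum_card_fiberwise
      (f := blockOf l S) (t := Finset.univ) (fun j _ => Finset.mem_univ _)]
    apply Finset.sum_congr rfl
    intro x _
    show ((Finset.range n).filter fun j => blockOf l S j = x ∧ blockOf l T j = y).card = _
    rw [Finset.filter_filter]
    congr 1
    apply Finset.filter_congr
    intro j _
    tauto
  -- relation holds whenever the matrix entry is nonzero
  have hnz : ∀ y x, A y x ≠ 0 → RelD k l m d₀ x y := by
    intro y x hne
    by_cases h : cX x = 0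
    · have hne' : (if y = F x then (1:ℝ) else 0) ≠ 0 := by
        have : A y x = if y = F x then (1:ℝ) else 0 := by simp only [hA, h, if_true]
        rwa [this] at hne
      have hy : y = F x := by
        by_contra hyne
        rw [if_neg hyne] at hne'
        exact hne' rfl
      rw [hy, hF]
      exact fb_rel m d₀ hkl x
    · have hne' : ((cXY x y : ℝ) / (cX x)) ≠ 0 := by
        have : A y x = (cXY x y : ℝ) / (cX x) := by simp only [hA, h, if_false]
        rwa [this] at hne
      have hXY : cXY x y ≠ 0 := by
        intro h0
        rw [h0] at hne'
        simp at hne'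
      obtain ⟨j, hj⟩ := Finset.card_ne_zero.1 hXY
      have hj' := Finset.mem_filter.1 hj
      rw [← hj'.2.1, ← hj'.2.2]
      exact hrel j
  refine ⟨A, ?_, ?_, ?_, ?_, ?_⟩
  · -- nonneg
    intro y x
    by_cases h : cX x = 0
    · have : A y x = if y = F x then (1:ℝ) else 0 := by simp only [hA, h, if_true]
      rw [this]
      split <;> norm_num
    · have : A y x = (cXY x y : ℝ) / (cX x) := by simp only [hA, h, if_false]
      rw [this]
      positivity
  · -- column stochastic
    intro x
    by_cases h : cX x = 0
    · have : ∀ y, A y x = if y = F x then 1 else 0 := by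
        intro y; simp only [hA, h, if_true]
      simp only [this]
      simp
    · have : ∀ y, A y x = (cXY x y : ℝ) / (cX x) := by
        intro y; simp only [hA, h, if_false]
      simp only [this]
      rw [← Finset.sum_div]
      rw [show ∑ y, (cXY x y : ℝ) = ((∑ y, cXY x y : ℕ) : ℝ) from by push_cast; rfl]
      rw [hfibX x]
      exact div_self (by exact_mod_cast h)
  · -- maps p to q
    funext y
    have hterm : ∀ x, A y x * p x = (cXY x y : ℝ) / n := by
      intro x
      rw [hpx x]
      by_cases h : cX x = 0
      · have hXY0 : cXY x y = 0 := by
          rw [hcXY]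
          apply Finset.card_eq_zero.2
          rw [hcX] at h
          have hempty := Finset.card_eq_zero.1 h
          apply Finset.eq_empty_of_forall_notMem
          intro j hj
          have hj' := Finset.mem_filter.1 hj
          have : j ∈ (Finset.range n).filter fun j => blockOf l S j = x :=
            Finset.mem_filter.2 ⟨hj'.1, hj'.2.1⟩
          rw [hempty] at this
          exact absurd this (Finset.notMem_empty j)
        rw [h, hXY0]
        simp
      · have hAyx : A y x = (cXY x y : ℝ) / (cX x) := by simp only [hA, h, if_false]
        rw [hAyx]
        have hcx : ((cX x : ℝ)) ≠ 0 := by exact_mod_cast h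
        field_simp
    show ∑ x, A y x * p x = q y
    simp only [hterm]
    rw [← Finset.sum_div]
    rw [show ∑ x, (cXY x y : ℝ) = ((∑ x, cXY x y : ℕ) : ℝ) from by push_cast; rfl]
    rw [hfibY y, hqy y]
  · -- rows
    intro y
    calc (Finset.univ.filter fun x => A y x ≠ 0).card
        ≤ (Finset.univ.filter fun x => RelD k l m d₀ x y).card := by
          apply Finset.card_le_card
          intro x hx
          rw [Finset.mem_filter] at hx ⊢
          exact ⟨hx.1, hnz y x hx.2⟩
      _ ≤ (m + 1) * m := count_row m hm hkl d₀ y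
  · -- columns
    intro x
    calc (Finset.univ.filter fun y => A y x ≠ 0).card
        ≤ (Finset.univ.filter fun y => RelD k l m d₀ x y).card := by
          apply Finset.card_le_card
          intro y hy
          rw [Finset.mem_filter] at hy ⊢
          exact ⟨hy.1, hnz y x hy.2⟩
      _ ≤ m + 1 := count_col m hkl d₀ x
      _ ≤ (m + 1) * m := Nat.le_mul_of_pos_right _ (by omega)

end DispAux


open DispAux in
theorem main_lemma_dispersion_bound (k m : ℕ) (hk : 2 ≤ k) (hm : 1 ≤ m)
    (α : ℝ) (hα : 0 ≤ α)
    (s : ℕ) (hs : s = ∑ i ∈ Finset.range (Nat.log k m + 1), m / k ^ i % k)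
    (S T : ℕ → Fin k)
    (hS : IsExpansion k S (Int.fract α)) (hT : IsExpansion k T (Int.fract ((m : ℝ) * α)))
    (l n : ℕ) (hl : 0 < l) (hn : 0 < n) :
    logDisp (blockFreq k l S n) (blockFreq k l T n) ≤
      Real.logb 2 ((m : ℝ) ^ 2 * ((s : ℝ) + 1)) := by
  classical
  have hk0 : 0 < k := by omega
  have hklpos : 0 < k ^ l := pow_pos hk0 l
  -- the digit sum of `m` is at least 1
  have hs1 : 1 ≤ s := by
    rw [hs]
    have hle : k ^ (Nat.log k m) ≤ m := Nat.pow_log_le_self k (by omega)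
    have hlt : m < k ^ (Nat.log k m + 1) := Nat.lt_pow_succ_log_self (by omega) m
    have hdiv1 : 1 ≤ m / k ^ (Nat.log k m) := (Nat.one_le_div_iff (pow_pos hk0 _)).2 hle
    have hdivlt : m / k ^ (Nat.log k m) < k := by
      apply Nat.div_lt_of_lt_mul
      calc m < k ^ (Nat.log k m + 1) := hlt
        _ = k ^ (Nat.log k m) * k := pow_succ k _
    have hmod : m / k ^ (Nat.log k m) % k = m / k ^ (Nat.log k m) := Nat.mod_eq_of_lt hdivlt
    calc 1 ≤ m / k ^ (Nat.log k m) % k := by rw [hmod]; exact hdiv1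
      _ ≤ ∑ i ∈ Finset.range (Nat.log k m + 1), m / k ^ i % k :=
        Finset.single_le_sum (f := fun i => m / k ^ i % k) (fun i _ => Nat.zero_le _)
          (Finset.self_mem_range_succ _)
  -- set-up: fractional parts and the carry sequence
  set β := Int.fract α with hβ
  set γ := Int.fract ((m : ℝ) * α) with hγ
  set e : ℤ := ⌊(m : ℝ) * α⌋ - m * ⌊α⌋ with he
  have hγβ : γ = m * β - e := by
    rw [hγ, hβ, he]
    unfold Int.fract
    push_cast
    ring
  have hS' : β = ∑' i : ℕ, ((S i : ℕ) : ℝ) / (k : ℝ) ^ (i + 1) := hS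
  have hT' : γ = ∑' i : ℕ, ((T i : ℕ) : ℝ) / (k : ℝ) ^ (i + 1) := hT
  set d : ℕ → ℤ := fun N => expPartial T N - m * expPartial S N + e * (k : ℤ) ^ N with hd
  have hdreal : ∀ N, (d N : ℝ) =
      (m : ℝ) * (β * (k : ℝ) ^ N - (expPartial S N : ℝ))
        - (γ * (k : ℝ) ^ N - (expPartial T N : ℝ)) := by
    intro N
    simp only [hd]
    rw [hγβ]
    push_cast
    ring
  have hm1R : (1 : ℝ) ≤ (m : ℝ) := by exact_mod_cast hm
  have hdmem : ∀ N, -1 ≤ d N ∧ d N ≤ (m : ℤ) := by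
    intro N
    have hρ := exp_tail_mem hk S hS' N
    have hσ := exp_tail_mem hk T hT' N
    constructor
    · have h1 : (-1 : ℝ) ≤ (d N : ℝ) := by
        rw [hdreal N]
        nlinarith [hρ.1, hσ.2]
      exact_mod_cast h1
    · have h1 : (d N : ℝ) ≤ (m : ℝ) := by
        rw [hdreal N]
        nlinarith [hρ.2, hσ.1]
      exact_mod_cast h1
  have hdexcl : ∀ N₁ N₂, d N₁ = -1 → d N₂ ≠ (m : ℤ) := by
    intro N₁ N₂ h1 h2
    have htail1 : γ * (k : ℝ) ^ N₁ - (expPartial T N₁ : ℝ) = 1 := by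
      have hr := hdreal N₁
      rw [h1] at hr
      push_cast at hr
      have hσ₁ := exp_tail_mem hk T hT' N₁
      have hρ₁ := exp_tail_mem hk S hS' N₁
      nlinarith [hρ₁.1, hσ₁.2]
    have htail0 : γ * (k : ℝ) ^ N₂ - (expPartial T N₂ : ℝ) = 0 := by
      have hr := hdreal N₂
      rw [h2] at hr
      push_cast at hr
      have hσ₂ := exp_tail_mem hk T hT' N₂
      have hρ₂ := exp_tail_mem hk S hS' N₂
      nlinarith [hρ₂.2, hσ₂.1]
    have e1 := tail_prop1 hk T hT' htail1 N₂
    have e0 := tail_prop0 hk T hT' htail0 N₁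
    rw [show N₂ + N₁ = N₁ + N₂ from by omega] at e0
    rw [e0] at e1
    norm_num at e1
  set d₀ : ℤ := if ∃ N, d N = -1 then -1 else 0 with hd₀def
  have hd₀mem : ∀ N, d₀ ≤ d N ∧ d N ≤ d₀ + m := by
    intro N
    by_cases hex : ∃ N', d N' = -1
    · rw [hd₀def, if_pos hex]
      obtain ⟨N₁, hN₁⟩ := hex
      have hmem := hdmem N
      have hne := hdexcl N₁ N hN₁
      omega
    · rw [hd₀def, if_neg hex]
      have hmem := hdmem N
      have hne : d N ≠ -1 := fun hc => hex ⟨N, hc⟩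
      omega
  -- the key congruence between corresponding blocks
  have hkey : ∀ j : ℕ, (numB (blockOf l T j) : ℤ)
      = m * (numB (blockOf l S j) : ℤ) + d (j * l + l) - (k : ℤ) ^ l * d (j * l) := by
    intro j
    have hAS := expPartial_add S (j * l) l
    have hBT := expPartial_add T (j * l) l
    have hnumS : (numB (blockOf l S j) : ℤ)
        = ∑ t ∈ Finset.range l, ((S (j * l + t) : ℕ) : ℤ) * (k : ℤ) ^ (l - 1 - t) := by
      rw [numB_formula]
      push_cast
      exact Fin.sum_univ_eq_sum_range
        (fun t => ((S (j * l + t) : ℕ) : ℤ) * (k : ℤ) ^ (l - 1 - t)) l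
    have hnumT : (numB (blockOf l T j) : ℤ)
        = ∑ t ∈ Finset.range l, ((T (j * l + t) : ℕ) : ℤ) * (k : ℤ) ^ (l - 1 - t) := by
      rw [numB_formula]
      push_cast
      exact Fin.sum_univ_eq_sum_range
        (fun t => ((T (j * l + t) : ℕ) : ℤ) * (k : ℤ) ^ (l - 1 - t)) l
    have hp : (k : ℤ) ^ (j * l + l) = (k : ℤ) ^ (j * l) * (k : ℤ) ^ l := pow_add _ _ _
    simp only [hd]
    rw [hnumS, hnumT]
    linear_combination (-1 : ℤ) * hBT + (m : ℤ) * hAS - e * hp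
  have hrel : ∀ j : ℕ, RelD k l m d₀ (blockOf l S j) (blockOf l T j) := by
    intro j
    refine ⟨(d (j * l + l) - d₀).toNat, ?_, ?_⟩
    · have h1 := hd₀mem (j * l + l)
      omega
    · have ht : (((d (j * l + l) - d₀).toNat : ℤ)) = d (j * l + l) - d₀ :=
        Int.toNat_of_nonneg (by have := hd₀mem (j * l + l); omega)
      rw [ht, hkey j]
      exact ⟨-(d (j * l)), by ring⟩
  obtain ⟨A, hAwit⟩ := witness_exists m hm hklpos n hn S T d₀ hrel
  have hMle : (m + 1) * m ≤ m ^ 2 * (s + 1) := by nlinarith [hs1, hm]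
  have hAwit' := dispWitness_mono hMle hAwit
  unfold logDisp
  set SetM := {m' : ℕ | 0 < m' ∧ ∃ B, DispWitness m' B (blockFreq k l S n) (blockFreq k l T n)}
    with hSetM
  have hmem : m ^ 2 * (s + 1) ∈ SetM := by
    constructor
    · have : 0 < m ^ 2 := pow_pos (by omega) 2
      exact Nat.mul_pos this (Nat.succ_pos s)
    · exact ⟨A, hAwit'⟩
  have hinf_le : sInf SetM ≤ m ^ 2 * (s + 1) := Nat.sInf_le hmem
  have hinf_pos : 0 < sInf SetM := (Nat.sInf_mem ⟨_, hmem⟩).1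
  apply Real.logb_le_logb_of_le one_lt_two
  · exact_mod_cast hinf_pos
  · calc ((sInf SetM : ℕ) : ℝ) ≤ ((m ^ 2 * (s + 1) : ℕ) : ℝ) := by exact_mod_cast hinf_le
      _ = (m : ℝ) ^ 2 * ((s : ℝ) + 1) := by push_cast; ring
end
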